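/- arXiv:2510.08760 — 8 statements merged into one kernel-verified Lean document; each statement's English description precedes it below -/
import Mathlib

section
/- Suppose P(x) = x^r f(x^s) ∈ 𝔽_q[x] is a permutation polynomial over 𝔽_q. Then each A_i = f(ξ^i) is nonzero, and for every integer b such that γ^b = A_0·A_1⋯A_{l−1}, the integer l divides 2b; that is, l divides 2·Ind_γ(A_0 A_1 ⋯ A_{l−1}). -/
open Finset

private lemma finset_surjOn {α β : Type*} {s : Finset α} {t : Finset β} (i : α → β)
    (hi : ∀ a ∈ s, i a ∈ t) (hinj : Set.InjOn i ↑s) (hcard : t.card ≤ s.card) :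
    Set.SurjOn i ↑s ↑t := by
  intro b hb
  obtain ⟨a, ha, hab⟩ := Finset.surj_on_of_inj_on_of_card_le (fun a _ => i a)
    (fun a ha => hi a ha) (fun a₁ a₂ h1 h2 h => hinj h1 h2 h) hcard b hb
  exact ⟨a, ha, hab.symm⟩

/-- If `P(x) = x^r f(x^s)` is a permutation polynomial over `𝔽_q`,
then each `A_i = f(ξ^i)` is nonzero, and for every integer `b` with
`γ^b = A_0 A_1 ⋯ A_{l-1}`, we have `l ∣ 2b`. -/
theorem stmt_1 (p m q : ℕ) (hp : p.Prime) (hm : 0 < m) (hq : q = p ^ m)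
    (F : Type*) [Field F] [Fintype F] (hF : Fintype.card F = q)
    (l s : ℕ) (hl : 0 < l) (hs : 0 < s) (hls : q - 1 = l * s)
    (γ : F) (hγ : orderOf γ = q - 1)
    (ξ : F) (hξ : ξ = γ ^ s)
    (f : Polynomial F) (r : ℕ) (hr : 0 < r)
    (A : ℕ → F) (hA : ∀ i, A i = f.eval (ξ ^ i))
    (hPP : Function.Bijective (fun x : F => x ^ r * f.eval (x ^ s))) :
    (∀ i ≤ l - 1, A i ≠ 0) ∧
    ∀ b : ℤ, γ ^ b = ∏ i ∈ Finset.range l, A i → (l : ℤ) ∣ 2 * b := by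
  classical
  set P : F → F := fun x => x ^ r * f.eval (x ^ s) with hP
  have hq2 : 2 ≤ q := by
    rw [hq]
    exact Nat.one_lt_pow hm.ne' hp.one_lt
  have hq1 : 0 < q - 1 := by omega
  have hγpow : γ ^ (q - 1) = 1 := hγ ▸ pow_orderOf_eq_one γ
  have hγ0 : γ ≠ 0 := by
    intro h
    rw [h, zero_pow hq1.ne'] at hγpow
    exact one_ne_zero hγpow.symm
  have hP0 : P 0 = 0 := by
    simp [hP, zero_pow hr.ne']
  -- part 1 : each A i is nonzero
  have hA0 : ∀ i, A i ≠ 0 := by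
    intro i h
    have hPγ : P (γ ^ i) = 0 := by
      have : (γ ^ i) ^ s = ξ ^ i := by
        rw [hξ, ← pow_mul, ← pow_mul, mul_comm]
      rw [hP]
      simp only
      rw [this, ← hA i, h, mul_zero]
    have := hPP.1 (hPγ.trans hP0.symm)
    exact pow_ne_zero i hγ0 this
  refine ⟨fun i _ => hA0 i, ?_⟩
  -- the unit corresponding to γ
  set u : Fˣ := Units.mk0 γ hγ0 with hu
  have huval : (u : F) = γ := rfl
  have horder : orderOf u = q - 1 := by
    rw [← orderOf_units, huval, hγ]
  have hcardU : Fintype.card Fˣ = q - 1 := by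
    rw [Fintype.card_units, hF]
  -- the finset of nonzero elements
  set T : Finset F := Finset.univ.erase 0 with hT
  have hTmem : ∀ x : F, x ∈ T ↔ x ≠ 0 := by
    intro x; simp [hT]
  have hTcard : T.card = q - 1 := by
    rw [hT, card_erase_of_mem (mem_univ 0), card_univ, hF]
  -- bridge : products over T equal products over range (q-1) of γ-powers
  have hbridge : ∀ g : F → F, ∏ x ∈ T, g x = ∏ j ∈ range (q - 1), g (γ ^ j) := by
    intro g
    refine (Finset.prod_nbij (fun j => γ ^ j) ?_ ?_ ?_ (fun a _ => rfl)).symm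
    · intro j _
      exact (hTmem _).2 (pow_ne_zero j hγ0)
    · intro a ha b hb hab
      simp only [coe_range, Set.mem_Iio] at ha hb
      have : u ^ a = u ^ b := Units.ext (by simpa [huval] using hab)
      exact pow_injOn_Iio_orderOf (by rwa [horder]) (by rwa [horder]) this
    · apply finset_surjOn
      · intro j _
        exact (hTmem _).2 (pow_ne_zero j hγ0)
      · intro a ha b hb hab
        simp only [coe_range, Set.mem_Iio] at ha hb
        have : u ^ a = u ^ b := Units.ext (by simpa [huval] using hab)
        exact pow_injOn_Iio_orderOf (by rwa [horder]) (by rwa [horder]) this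
      · rw [hTcard, card_range]
  -- Wilson : product of nonzero elements is -1
  have hWilson : ∏ x ∈ T, x = -1 := by
    have h1 : ∏ x ∈ T, x = ∏ x : Fˣ, (x : F) := by
      refine (Finset.prod_nbij (fun x : Fˣ => (x : F)) ?_ ?_ ?_ (fun a _ => rfl)).symm
      · intro a _; exact (hTmem _).2 a.ne_zero
      · intro a _ b _ hab; exact Units.ext hab
      · apply finset_surjOn
        · intro a _; exact (hTmem _).2 a.ne_zero
        · intro a _ b _ hab; exact Units.ext hab
        · rw [hTcard, card_univ, hcardU]
    rw [h1]
    have := FiniteField.prod_univ_units_id_eq_neg_one (K := F)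
    calc ∏ x : Fˣ, (x : F) = ((∏ x : Fˣ, x : Fˣ) : F) := by
          exact (map_prod (Units.coeHom F) (fun x => x) univ).symm
      _ = ((-1 : Fˣ) : F) := by rw [this]
      _ = -1 := by simp
  -- the permutation argument
  have hmaps : ∀ a ∈ T, P a ∈ T := by
    intro a ha
    rw [hTmem] at ha ⊢
    intro h
    exact ha (hPP.1 (h.trans hP0.symm))
  have hperm : ∏ x ∈ T, P x = ∏ x ∈ T, x := by
    refine Finset.prod_nbij P hmaps hPP.1.injOn ?_ (fun a _ => rfl)
    exact finset_surjOn P hmaps hPP.1.injOn le_rfl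
  -- splitting the product
  set C : F := ∏ i ∈ range l, A i with hC
  have hξl : ξ ^ l = 1 := by
    rw [hξ, ← pow_mul, mul_comm s l, ← hls]
    exact hγpow
  have hprodf : ∏ x ∈ T, f.eval (x ^ s) = C ^ s := by
    rw [hbridge (fun x => f.eval (x ^ s))]
    have hrw : ∀ j, (γ ^ j) ^ s = ξ ^ j := by
      intro j; rw [hξ, ← pow_mul, ← pow_mul, mul_comm]
    have key : ∀ k : ℕ, ∏ j ∈ range (l * k), f.eval (ξ ^ j) = C ^ k := by
      intro k
      induction k with
      | zero => simp
      | succ n ih =>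
        rw [Nat.mul_succ, Finset.prod_range_add, ih, pow_succ]
        congr 1
        rw [hC]
        refine Finset.prod_congr rfl fun i _ => ?_
        rw [hA, pow_add, pow_mul, hξl, one_pow, one_mul]
    calc ∏ j ∈ range (q - 1), f.eval ((γ ^ j) ^ s)
        = ∏ j ∈ range (l * s), f.eval (ξ ^ j) := by
          rw [hls]; exact Finset.prod_congr rfl fun j _ => by rw [hrw]
      _ = C ^ s := key s
  have hsplit : ∏ x ∈ T, P x = (∏ x ∈ T, x) ^ r * (C ^ s) := by
    rw [hP, ← hprodf, ← Finset.prod_pow, ← Finset.prod_mul_distrib]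
  -- conclusion : (-1)^r * C^s = -1
  have hkey : (-1 : F) ^ r * C ^ s = -1 := by
    rw [← hWilson, ← hsplit, hperm]
  have hCsq : (C ^ s) ^ 2 = 1 := by
    have h2 : ((-1 : F) ^ r * C ^ s) ^ 2 = (-1 : F) ^ 2 := by rw [hkey]
    rwa [mul_pow, ← pow_mul, mul_comm r 2, pow_mul, neg_one_sq, one_pow, one_mul] at h2
  -- final divisibility
  intro b hb
  have hzpow : γ ^ (b * (2 * s : ℕ) : ℤ) = 1 := by
    rw [zpow_mul, hb, zpow_natCast, mul_comm 2 s, pow_mul, hCsq]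
  have huzpow : u ^ (b * (2 * s : ℕ) : ℤ) = 1 := by
    apply Units.ext
    rw [Units.val_zpow_eq_zpow_val, huval, hzpow, Units.val_one]
  have hdvd : ((q - 1 : ℕ) : ℤ) ∣ b * (2 * s : ℕ) := by
    rw [← horder]
    exact orderOf_dvd_iff_zpow_eq_one.mpr huzpow
  rw [hls] at hdvd
  have hdvd' : ((l : ℤ) * s) ∣ (2 * b) * s := by
    push_cast at hdvd ⊢
    calc (l : ℤ) * s ∣ b * (2 * s) := hdvd
      _ = 2 * b * s := by ring
  exact (mul_dvd_mul_iff_right (by exact_mod_cast hs.ne' : (s : ℤ) ≠ 0)).1 hdvd'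
end

section
/- Let r be a positive integer with r < q − 1. If P(x) = x^r f(x^s) is a permutation polynomial over 𝔽_q, then all of the following hold: (i) gcd(r, s) = 1; (ii) A_i = f(ξ^i) ≠ 0 for every i = 0, 1, …, l − 1; (iii) for every integer b with γ^b = A_0 A_1 ⋯ A_{l−1}, l divides 2b. -/
/-- Let `0 < r < q - 1`. If `P(x) = x^r f(x^s)` is a permutation
polynomial over `𝔽_q`, then (i) `gcd(r,s) = 1`; (ii) `A_i = f(ξ^i) ≠ 0` for all
`i = 0, …, l-1`; (iii) for every integer `b` with `γ^b = A_0 A_1 ⋯ A_{l-1}`,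
`l` divides `2b`. -/
theorem stmt_2 (p m q : ℕ) (hp : p.Prime) (hm : 0 < m) (hq : q = p ^ m)
    (F : Type*) [Field F] [Fintype F] (hF : Fintype.card F = q)
    (l s : ℕ) (hl : 0 < l) (hs : 0 < s) (hls : q - 1 = l * s)
    (γ : F) (hγ : orderOf γ = q - 1)
    (ξ : F) (hξ : ξ = γ ^ s)
    (f : Polynomial F) (r : ℕ) (hr : 0 < r) (hr' : r < q - 1)
    (A : ℕ → F) (hA : ∀ i, A i = f.eval (ξ ^ i))
    (hPP : Function.Bijective (fun x : F => x ^ r * f.eval (x ^ s))) :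
    Nat.gcd r s = 1 ∧
    (∀ i ≤ l - 1, A i ≠ 0) ∧
    ∀ b : ℤ, γ ^ b = ∏ i ∈ Finset.range l, A i → (l : ℤ) ∣ 2 * b := by
  classical
  have hq2 : 2 ≤ q := by
    rw [hq]
    calc 2 = 2 ^ 1 := rfl
    _ ≤ p ^ m := Nat.pow_le_pow_left hp.two_le 1 |>.trans (Nat.pow_le_pow_right hp.pos hm)
  have hq1 : 0 < q - 1 := by omega
  have hγq : γ ^ (q - 1) = 1 := by rw [← hγ]; exact pow_orderOf_eq_one γ
  have hγ0 : γ ≠ 0 := by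
    intro h
    rw [h, zero_pow hq1.ne'] at hγq
    exact zero_ne_one hγq
  have hsq : s ∣ q - 1 := ⟨l, by rw [hls, mul_comm]⟩
  -- (i)
  have part1 : Nat.gcd r s = 1 := by
    set d := Nat.gcd r s with hd
    have hdr : d ∣ r := Nat.gcd_dvd_left r s
    have hds : d ∣ s := Nat.gcd_dvd_right r s
    have hdq : d ∣ q - 1 := hds.trans hsq
    set ζ := γ ^ ((q - 1) / d) with hζ
    have key : ∀ e : ℕ, d ∣ e → ζ ^ e = 1 := by
      rintro e ⟨c, hc⟩
      rw [hζ, ← pow_mul, hc, ← mul_assoc, Nat.div_mul_cancel hdq, pow_mul, hγq, one_pow]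
    have hP : ζ ^ r * f.eval (ζ ^ s) = 1 ^ r * f.eval (1 ^ s) := by
      rw [key r hdr, key s hds, one_pow, one_pow]
    have hζ1 : ζ = 1 := hPP.injective hP
    have hdvd : orderOf γ ∣ (q - 1) / d := orderOf_dvd_of_pow_eq_one hζ1
    rw [hγ] at hdvd
    have h1 : (q - 1) / d ∣ q - 1 := Nat.div_dvd_of_dvd hdq
    have h2 : (q - 1) / d = q - 1 := Nat.dvd_antisymm h1 hdvd
    have h3 := Nat.div_mul_cancel hdq
    rw [h2] at h3
    nlinarith [h3]
  -- (ii)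
  have hxis : ∀ i : ℕ, (γ ^ i) ^ s = ξ ^ i := by
    intro i; rw [hξ, ← pow_mul, ← pow_mul, mul_comm]
  have hP0 : (0 : F) ^ r * f.eval ((0 : F) ^ s) = 0 := by
    rw [zero_pow hr.ne', zero_mul]
  have part2' : ∀ i : ℕ, A i ≠ 0 := by
    intro i hAi
    rw [hA i] at hAi
    have h1 : (γ ^ i) ^ r * f.eval ((γ ^ i) ^ s) = (0 : F) ^ r * f.eval ((0 : F) ^ s) := by
      rw [hxis, hAi, mul_zero, hP0]
    exact pow_ne_zero i hγ0 (hPP.injective h1)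
  refine ⟨part1, fun i _ => part2' i, ?_⟩
  -- (iii)
  intro b hb
  set u : Fˣ := Units.mk0 γ hγ0 with hu
  have huγ : (u : F) = γ := rfl
  have huo : orderOf u = q - 1 := by rw [← orderOf_units, huγ, hγ]
  have hgen : ∀ x : F, x ≠ 0 → ∃ j : ℕ, γ ^ j = x := by
    intro x hx
    have htop : Subgroup.zpowers u = ⊤ := by
      apply Subgroup.eq_top_of_card_eq
      rw [Nat.card_eq_fintype_card, Fintype.card_zpowers, huo,
        Nat.card_eq_fintype_card, Fintype.card_units, hF]
    have hmem : Units.mk0 x hx ∈ Subgroup.zpowers u := htop ▸ Subgroup.mem_top _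
    have hfin : IsOfFinOrder u := by
      rw [← orderOf_pos_iff, huo]; exact hq1
    rw [← hfin.mem_powers_iff_mem_zpowers] at hmem
    obtain ⟨j, hj⟩ := hmem
    refine ⟨j, ?_⟩
    have := congrArg Units.val hj
    simpa [huγ] using this
  have hξo : orderOf ξ = l := by
    have : ξ = ((u ^ s : Fˣ) : F) := by rw [Units.val_pow_eq_pow_val, huγ, hξ]
    rw [this, orderOf_units, orderOf_pow, huo, Nat.gcd_eq_right hsq, hls,
      Nat.mul_div_cancel _ hs]
  have hξ0 : ξ ≠ 0 := by rw [hξ]; exact pow_ne_zero s hγ0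
  set T : Finset F := (Finset.range l).image (ξ ^ ·) with hT
  set h : F → F := fun z => z ^ r * (f.eval z) ^ s with hh
  set P : F → F := fun x => x ^ r * f.eval (x ^ s) with hPdef
  have hinjξ : Set.InjOn (ξ ^ ·) (Finset.range l : Set ℕ) := by
    intro a ha b' hb' hab
    simp only [Finset.coe_range, Set.mem_Iio] at ha hb'
    exact pow_injOn_Iio_orderOf (x := ξ) (by rw [hξo]; exact ha) (by rw [hξo]; exact hb') hab
  have hmemT : ∀ x : F, x ≠ 0 → x ^ s ∈ T := by
    intro x hx
    obtain ⟨j, hj⟩ := hgen x hx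
    rw [hT]
    refine Finset.mem_image.2 ⟨j % l, Finset.mem_range.2 (Nat.mod_lt j hl), ?_⟩
    show ξ ^ (j % l) = x ^ s
    rw [← hξo, pow_mod_orderOf, ← hj, hxis]
  have hhP : ∀ x : F, h (x ^ s) = (P x) ^ s := by
    intro x
    simp only [hh, hPdef, mul_pow, ← pow_mul, mul_comm r s]
  have hPne : ∀ x : F, x ≠ 0 → P x ≠ 0 := by
    intro x hx hPx
    apply hx
    apply hPP.injective
    show P x = P 0
    rw [hPx, hPdef]
    exact hP0.symm
  have hmaps : T.image h ⊆ T := by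
    intro y hy
    rw [hT] at hy ⊢
    obtain ⟨z, hz, rfl⟩ := Finset.mem_image.1 hy
    obtain ⟨i, hi, rfl⟩ := Finset.mem_image.1 hz
    show h ((fun n => ξ ^ n) i) ∈ _
    simp only
    rw [← hxis, hhP]
    exact hmemT _ (hPne _ (pow_ne_zero i hγ0))
  have hsurj : T ⊆ T.image h := by
    intro y hy
    rw [hT] at hy
    obtain ⟨i, hi, rfl⟩ := Finset.mem_image.1 hy
    obtain ⟨x, hx⟩ := hPP.surjective (γ ^ i)
    have hx' : P x = γ ^ i := hx
    have hx0 : x ≠ 0 := by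
      intro h0
      rw [h0] at hx'
      exact pow_ne_zero i hγ0 (by rw [← hx']; exact hP0)
    refine Finset.mem_image.2 ⟨x ^ s, hmemT x hx0, ?_⟩
    show h (x ^ s) = (fun n => ξ ^ n) i
    rw [hhP, hx']
    exact hxis i
  have himg : T.image h = T := Finset.Subset.antisymm hmaps hsurj
  have hinjT : Set.InjOn h (T : Set F) := by
    apply Finset.injOn_of_card_image_eq
    rw [himg]
  have hprod : ∏ z ∈ T, h z = ∏ z ∈ T, z := by
    conv_rhs => rw [← himg]
    rw [Finset.prod_image (fun a ha b' hb' => hinjT ha hb')]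
  set N : ℕ := ∑ i ∈ Finset.range l, i with hN
  have hprodT : ∀ g : F → F, ∏ z ∈ T, g z = ∏ i ∈ Finset.range l, g (ξ ^ i) := by
    intro g
    rw [hT, Finset.prod_image (fun a ha b' hb' => hinjξ ha hb')]
  have hright : ∏ z ∈ T, z = ξ ^ N := by
    rw [show (∏ z ∈ T, z) = ∏ z ∈ T, (fun w => w) z from rfl, hprodT (fun w => w)]
    exact Finset.prod_pow_eq_pow_sum _ _ _
  have hleft : ∏ z ∈ T, h z = (ξ ^ N) ^ r * (∏ i ∈ Finset.range l, A i) ^ s := by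
    rw [hprodT h]
    simp only [hh]
    rw [Finset.prod_mul_distrib, ← Finset.prod_pow]
    congr 1
    · rw [← pow_mul, mul_comm N r, pow_mul, ← Finset.prod_pow_eq_pow_sum]
      apply Finset.prod_congr rfl; intros; rw [← pow_mul, ← pow_mul, mul_comm]
    · exact Finset.prod_congr rfl fun i _ => by rw [hA]
  have hkey : (ξ ^ N) ^ r * (γ ^ b) ^ s = ξ ^ N := by
    rw [hb, ← hleft, hprod, hright]
  -- convert to single zpow equation
  have e1 : (ξ ^ N) ^ r = γ ^ ((s * N * r : ℕ) : ℤ) := by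
    rw [zpow_natCast, hξ, ← pow_mul, ← pow_mul, mul_assoc]
  have e2 : (γ ^ b) ^ s = γ ^ (b * (s : ℤ)) := by
    rw [← zpow_natCast (γ ^ b) s, ← zpow_mul]
  have e3 : ξ ^ N = γ ^ ((s * N : ℕ) : ℤ) := by
    rw [zpow_natCast, hξ, ← pow_mul]
  rw [e1, e2, e3] at hkey
  rw [← zpow_add₀ hγ0] at hkey
  have hukey : u ^ (((s * N * r : ℕ) : ℤ) + b * (s : ℤ)) = u ^ ((s * N : ℕ) : ℤ) := by
    apply Units.ext
    rw [Units.val_zpow_eq_zpow_val, Units.val_zpow_eq_zpow_val, huγ]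
    exact hkey
  have hmod : (((s * N * r : ℕ) : ℤ) + b * (s : ℤ)) ≡ ((s * N : ℕ) : ℤ) [ZMOD orderOf u] :=
    zpow_eq_zpow_iff_modEq.1 hukey
  rw [huo] at hmod
  have hdvd : ((q - 1 : ℕ) : ℤ) ∣ ((s * N : ℕ) : ℤ) - (((s * N * r : ℕ) : ℤ) + b * (s : ℤ)) :=
    Int.ModEq.dvd hmod
  rw [hls] at hdvd
  push_cast at hdvd
  have hs0 : (s : ℤ) ≠ 0 := by exact_mod_cast hs.ne'
  have hdvd2 : (l : ℤ) ∣ ((N : ℤ) - ((N : ℤ) * r + b)) := by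
    rcases hdvd with ⟨k, hk⟩
    refine ⟨k, ?_⟩
    apply mul_left_cancel₀ hs0
    ring_nf
    ring_nf at hk
    linarith
  have hN2 : (N : ℤ) * 2 = (l : ℤ) * ((l : ℤ) - 1) := by
    have h2N : N * 2 = l * (l - 1) := Finset.sum_range_id_mul_two l
    zify [hl] at h2N
    convert h2N using 2
  rcases hdvd2 with ⟨k, hk⟩
  refine ⟨-2 * k - ((l : ℤ) - 1) * ((r : ℤ) - 1), ?_⟩
  linear_combination (-2 : ℤ) * hk - ((r : ℤ) - 1) * hN2
end

section
/- Assume gcd(r, s) = 1 and A_i ≠ 0 for all i = 0, 1, …, l − 1. Then P(x) = x^r f(x^s) is a permutation polynomial over 𝔽_q if and only if for all i, j with 0 ≤ i < j ≤ l − 1 and every integer b with γ^b = A_i · A_j^{−1}, one has b ≢ r(j − i) (mod l). -/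
/-- Assume `gcd(r,s) = 1` and all `A_i ≠ 0`. Then `P(x) = x^r f(x^s)`
is a permutation polynomial over `𝔽_q` iff for all `0 ≤ i < j ≤ l-1` and every
integer `b` with `γ^b = A_i · A_j⁻¹`, one has `b ≢ r(j - i) (mod l)`. -/
theorem stmt_4 (p m q : ℕ) (hp : p.Prime) (hm : 0 < m) (hq : q = p ^ m)
    (F : Type*) [Field F] [Fintype F] (hF : Fintype.card F = q)
    (l s : ℕ) (hl : 0 < l) (hs : 0 < s) (hls : q - 1 = l * s)
    (γ : F) (hγ : orderOf γ = q - 1)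
    (ξ : F) (hξ : ξ = γ ^ s)
    (f : Polynomial F) (r : ℕ) (hr : 0 < r)
    (A : ℕ → F) (hA : ∀ i, A i = f.eval (ξ ^ i))
    (hrs : Nat.gcd r s = 1)
    (hA0 : ∀ i ≤ l - 1, A i ≠ 0) :
    Function.Bijective (fun x : F => x ^ r * f.eval (x ^ s)) ↔
      ∀ i j : ℕ, i < j → j ≤ l - 1 →
        ∀ b : ℤ, γ ^ b = A i * (A j)⁻¹ →
          ¬ (b ≡ (r : ℤ) * ((j : ℤ) - (i : ℤ)) [ZMOD (l : ℤ)]) := by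
  classical
  have hq2 : 2 ≤ q := by rw [hq]; exact Nat.one_lt_pow hm.ne' hp.one_lt
  have hN : 0 < q - 1 := by omega
  have hγ1 : γ ^ (q - 1) = 1 := by rw [← hγ]; exact pow_orderOf_eq_one γ
  have hγ0 : γ ≠ 0 := by
    intro h
    refine one_ne_zero (α := F) ?_
    rw [← hγ1, h, zero_pow hN.ne']
  set u : Fˣ := Units.mk0 γ hγ0 with hu
  have huord : orderOf u = q - 1 := by rw [← orderOf_units]; exact hγ
  have hz1 : ∀ a : ℤ, γ ^ a = 1 ↔ ((q - 1 : ℕ) : ℤ) ∣ a := by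
    intro a
    have h1 : ((u ^ a : Fˣ) : F) = γ ^ a := Units.val_zpow_eq_zpow_val u a
    rw [← h1, Units.val_eq_one, ← orderOf_dvd_iff_zpow_eq_one, huord]
  have hzeq : ∀ a b : ℤ, γ ^ a = γ ^ b ↔ ((q - 1 : ℕ) : ℤ) ∣ a - b := by
    intro a b
    rw [← hz1, zpow_sub₀ hγ0, div_eq_one_iff_eq (zpow_ne_zero b hγ0)]
  have hnateq : ∀ a b : ℕ, γ ^ a = γ ^ b ↔ ((q - 1 : ℕ) : ℤ) ∣ (a : ℤ) - (b : ℤ) := by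
    intro a b
    rw [← zpow_natCast γ a, ← zpow_natCast γ b]; exact hzeq _ _
  have hgen : ∀ x : F, x ≠ 0 → ∃ n : ℕ, γ ^ n = x := by
    intro x hx
    have hcard : Nat.card (Subgroup.zpowers u) = Nat.card Fˣ := by
      rw [Nat.card_zpowers, huord, Nat.card_eq_fintype_card, Fintype.card_units, hF]
    have htop : Subgroup.zpowers u = ⊤ := Subgroup.eq_top_of_card_eq _ hcard
    have hmem : Units.mk0 x hx ∈ Submonoid.powers u := by
      rw [mem_powers_iff_mem_zpowers, htop]; trivial
    rw [Submonoid.mem_powers_iff] at hmem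
    obtain ⟨n, hn⟩ := hmem
    refine ⟨n, ?_⟩
    have := congrArg (Units.val) hn
    rwa [Units.val_pow_eq_pow_val, Units.val_mk0] at this
  have hinj_lt : ∀ a b : ℕ, a < q - 1 → b < q - 1 → γ ^ a = γ ^ b → a = b := by
    intro a b ha hb hab
    have hval : u ^ a = u ^ b := by
      apply Units.ext
      rw [Units.val_pow_eq_pow_val, Units.val_pow_eq_pow_val]
      exact hab
    exact pow_injOn_Iio_orderOf (by rw [Set.mem_Iio, huord]; exact ha)
      (by rw [Set.mem_Iio, huord]; exact hb) hval
  have hξl : ξ ^ l = 1 := by rw [hξ, ← pow_mul, Nat.mul_comm s l, ← hls]; exact hγ1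
  have hximod : ∀ a : ℕ, ξ ^ a = ξ ^ (a % l) := by
    intro a
    conv_lhs => rw [← Nat.div_add_mod a l]
    rw [pow_add, pow_mul, hξl, one_pow, one_mul]
  have hpow_s : ∀ c : ℕ, (γ ^ c) ^ s = ξ ^ (c % l) := by
    intro c
    rw [← pow_mul, Nat.mul_comm c s, pow_mul, ← hξ, hximod]
  have hA0' : ∀ i0 : ℕ, i0 < l → A i0 ≠ 0 := fun i0 h => hA0 i0 (by omega)
  have hl0 : (l : ℤ) ≠ 0 := by exact_mod_cast hl.ne'
  have hs0 : (s : ℤ) ≠ 0 := by exact_mod_cast hs.ne'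
  have hPval : ∀ e : ℕ, (γ ^ e) ^ r * f.eval ((γ ^ e) ^ s) = (γ ^ e) ^ r * A (e % l) := by
    intro e; rw [hpow_s, ← hA]
  have hPs : ∀ e : ℕ, ((γ ^ e) ^ r * A (e % l)) ^ s = ξ ^ (r * (e % l)) * A (e % l) ^ s := by
    intro e
    rw [mul_pow]
    congr 1
    rw [← pow_mul, Nat.mul_comm r s, pow_mul, hpow_s, ← pow_mul, Nat.mul_comm (e % l) r]
  have hmod0 : ∀ i0 t : ℕ, i0 < l → (i0 + l * t) % l = i0 := by
    intro i0 t h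
    rw [Nat.add_mul_mod_self_left, Nat.mod_eq_of_lt h]
  have hexp_lt : ∀ i0 t : ℕ, i0 < l → t < s → i0 + l * t < q - 1 := by
    intro i0 t h1 h2
    rw [hls]
    calc i0 + l * t < l + l * t := by omega
      _ = l * (t + 1) := by ring
      _ ≤ l * s := Nat.mul_le_mul_left l h2
  have hξz : ∀ n : ℕ, ξ ^ n = γ ^ ((s * n : ℕ) : ℤ) := by
    intro n
    rw [zpow_natCast, pow_mul, ← hξ]
  have key : Function.Bijective (fun x : F => x ^ r * f.eval (x ^ s)) ↔
      ∀ i j : ℕ, i < j → j < l → ξ ^ (r * i) * A i ^ s ≠ ξ ^ (r * j) * A j ^ s := by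
    constructor
    · intro hbij i j hij hjl hEq
      have hil : i < l := hij.trans hjl
      set P : F → F := fun x => x ^ r * f.eval (x ^ s) with hPdef
      set Si := (Finset.range s).image (fun t => γ ^ (i + l * t)) with hSidef
      set Sj := (Finset.range s).image (fun t => γ ^ (j + l * t)) with hSjdef
      have hinjOn : ∀ i0 : ℕ, i0 < l →
          Set.InjOn (fun t => γ ^ (i0 + l * t)) (Finset.range s) := by
        intro i0 h0 t1 ht1 t2 ht2 hgam
        simp only [Finset.coe_range, Set.mem_Iio] at ht1 ht2
        have h1 := hinj_lt _ _ (hexp_lt i0 t1 h0 ht1) (hexp_lt i0 t2 h0 ht2) hgam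
        have h2 : l * t1 = l * t2 := by omega
        exact Nat.eq_of_mul_eq_mul_left hl h2
      have hcardSi : Si.card = s := by
        rw [hSidef, Finset.card_image_of_injOn (hinjOn i hil), Finset.card_range]
      have hcardSj : Sj.card = s := by
        rw [hSjdef, Finset.card_image_of_injOn (hinjOn j hjl), Finset.card_range]
      have hdisj : Disjoint Si Sj := by
        rw [Finset.disjoint_left]
        intro a hai haj
        simp only [hSidef, hSjdef, Finset.mem_image, Finset.mem_range] at hai haj
        obtain ⟨t1, ht1, h1⟩ := hai
        obtain ⟨t2, ht2, h2⟩ := haj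
        have heq := hinj_lt _ _ (hexp_lt i t1 hil ht1) (hexp_lt j t2 hjl ht2) (h1.trans h2.symm)
        have e1 := hmod0 i t1 hil
        have e2 := hmod0 j t2 hjl
        rw [heq] at e1
        exact hij.ne (e1.symm.trans e2)
      have hPSi : ∀ x ∈ Si ∪ Sj, (P x) ^ s = ξ ^ (r * i) * A i ^ s := by
        intro x hx
        rw [Finset.mem_union] at hx
        rcases hx with hx | hx
        · simp only [hSidef, Finset.mem_image, Finset.mem_range] at hx
          obtain ⟨t, ht, rfl⟩ := hx
          show ((γ ^ (i + l * t)) ^ r * f.eval ((γ ^ (i + l * t)) ^ s)) ^ s = _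
          rw [hPval, hPs, hmod0 i t hil]
        · simp only [hSjdef, Finset.mem_image, Finset.mem_range] at hx
          obtain ⟨t, ht, rfl⟩ := hx
          show ((γ ^ (j + l * t)) ^ r * f.eval ((γ ^ (j + l * t)) ^ s)) ^ s = _
          rw [hPval, hPs, hmod0 j t hjl, ← hEq]
      have hsub : (Si ∪ Sj).image P ⊆
          (Polynomial.nthRoots s (ξ ^ (r * i) * A i ^ s)).toFinset := by
        intro z hz
        rw [Multiset.mem_toFinset, Polynomial.mem_nthRoots hs]
        rw [Finset.mem_image] at hz
        obtain ⟨x, hx, rfl⟩ := hz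
        exact hPSi x hx
      have hbig : s + s ≤ s := by
        calc s + s = ((Si ∪ Sj).image P).card := by
              rw [Finset.card_image_of_injective _ hbij.injective,
                Finset.card_union_of_disjoint hdisj, hcardSi, hcardSj]
          _ ≤ (Polynomial.nthRoots s (ξ ^ (r * i) * A i ^ s)).toFinset.card :=
              Finset.card_le_card hsub
          _ ≤ Multiset.card (Polynomial.nthRoots s (ξ ^ (r * i) * A i ^ s)) :=
              Multiset.toFinset_card_le _
          _ ≤ s := Polynomial.card_nthRoots s _
      omega
    · intro hC
      rw [← Finite.injective_iff_bijective]
      intro x y hxy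
      dsimp only at hxy
      by_cases hx : x = 0
      · subst hx
        rw [zero_pow hr.ne', zero_mul] at hxy
        by_contra hy
        obtain ⟨d, hd⟩ := hgen y (fun h => hy h.symm)
        rw [← hd, hPval] at hxy
        exact (mul_ne_zero (pow_ne_zero r (pow_ne_zero d hγ0))
          (hA0' _ (Nat.mod_lt d hl))) hxy.symm
      · by_cases hy : y = 0
        · subst hy
          rw [zero_pow hr.ne', zero_mul] at hxy
          obtain ⟨c, hc⟩ := hgen x hx
          rw [← hc, hPval] at hxy
          exact absurd hxy (mul_ne_zero (pow_ne_zero r (pow_ne_zero c hγ0))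
            (hA0' _ (Nat.mod_lt c hl)))
        · obtain ⟨c, hc⟩ := hgen x hx
          obtain ⟨d, hd⟩ := hgen y hy
          subst hc
          subst hd
          rw [hPval c, hPval d] at hxy
          have hil : c % l < l := Nat.mod_lt c hl
          have hjl : d % l < l := Nat.mod_lt d hl
          by_cases hij : c % l = d % l
          · rw [hij] at hxy
            have h1 : (γ ^ c) ^ r = (γ ^ d) ^ r := mul_right_cancel₀ (hA0' _ hjl) hxy
            have h2 : ((q - 1 : ℕ) : ℤ) ∣ ((c * r : ℕ) : ℤ) - ((d * r : ℕ) : ℤ) := by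
              apply (hnateq _ _).mp
              rw [pow_mul, pow_mul]
              exact h1
            have h3 : (l : ℤ) ∣ (d : ℤ) - (c : ℤ) := Nat.ModEq.dvd hij
            obtain ⟨k, hk⟩ := h3
            rw [hls] at h2
            push_cast at h2
            have h4 : (l : ℤ) * s ∣ (l : ℤ) * (k * r) := by
              have hre : (l : ℤ) * (k * r) = -((c : ℤ) * r - (d : ℤ) * r) := by
                linear_combination (-(r : ℤ)) * hk
              rw [hre]
              exact dvd_neg.mpr h2
            have h5 : (s : ℤ) ∣ k * r := (mul_dvd_mul_iff_left hl0).mp h4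
            have hcop : IsCoprime (s : ℤ) (r : ℤ) := by
              rw [Nat.isCoprime_iff_coprime]
              exact Nat.Coprime.symm hrs
            have h6 : (s : ℤ) ∣ k := hcop.dvd_of_dvd_mul_right h5
            obtain ⟨w, hw⟩ := h6
            apply (hnateq _ _).mpr
            rw [hls]
            push_cast
            exact ⟨-w, by linear_combination (-1 : ℤ) * hk - (l : ℤ) * hw⟩
          · have hE2 : ξ ^ (r * (c % l)) * A (c % l) ^ s
                = ξ ^ (r * (d % l)) * A (d % l) ^ s := by
              have hpows := congrArg (fun z : F => z ^ s) hxy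
              rw [hPs, hPs] at hpows
              exact hpows
            rcases Nat.lt_or_ge (c % l) (d % l) with h | h
            · exact absurd hE2 (hC _ _ h hjl)
            · have h' : d % l < c % l := by omega
              exact absurd hE2.symm (hC _ _ h' hil)
  have keyiff : ∀ i j : ℕ, i < j → j < l →
      ((∀ b : ℤ, γ ^ b = A i * (A j)⁻¹ →
          ¬ (b ≡ (r : ℤ) * ((j : ℤ) - (i : ℤ)) [ZMOD (l : ℤ)])) ↔
        ξ ^ (r * i) * A i ^ s ≠ ξ ^ (r * j) * A j ^ s) := by
    intro i j hij hjl
    have hil : i < l := hij.trans hjl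
    have hAi := hA0' i hil
    have hAj := hA0' j hjl
    constructor
    · intro hb hEq
      obtain ⟨b, hbv⟩ := hgen (A i * (A j)⁻¹) (mul_ne_zero hAi (inv_ne_zero hAj))
      have hbA : A i = γ ^ b * A j := by rw [hbv]; field_simp
      have hE2 : ξ ^ (r * i) * (γ ^ b) ^ s = ξ ^ (r * j) := by
        have h := hEq
        rw [hbA, mul_pow, ← mul_assoc] at h
        exact mul_right_cancel₀ (pow_ne_zero s hAj) h
      have h3 : ((q - 1 : ℕ) : ℤ) ∣ ((s * (r * i) + b * s : ℕ) : ℤ) - ((s * (r * j) : ℕ) : ℤ) := by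
        apply (hnateq _ _).mp
        rw [pow_add]
        have e1 : γ ^ (s * (r * i)) = ξ ^ (r * i) := by rw [pow_mul, ← hξ]
        have e2 : γ ^ (b * s) = (γ ^ b) ^ s := by rw [pow_mul]
        have e3 : γ ^ (s * (r * j)) = ξ ^ (r * j) := by rw [pow_mul, ← hξ]
        rw [e1, e2, e3]
        exact hE2
      rw [hls] at h3
      push_cast at h3
      have h4 : (s : ℤ) * l ∣ (s : ℤ) * ((r : ℤ) * j - ((r : ℤ) * i + b)) := by
        have hre : (s : ℤ) * ((r : ℤ) * j - ((r : ℤ) * i + b))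
            = -((s : ℤ) * ((r : ℤ) * i) + (b : ℤ) * s - (s : ℤ) * ((r : ℤ) * j)) := by ring
        rw [hre, mul_comm (s : ℤ) (l : ℤ)]
        exact dvd_neg.mpr h3
      have h5 : (l : ℤ) ∣ (r : ℤ) * j - ((r : ℤ) * i + b) := (mul_dvd_mul_iff_left hs0).mp h4
      refine hb b (by rw [zpow_natCast]; exact hbv) (Int.modEq_iff_dvd.mpr ?_)
      have hre2 : (r : ℤ) * ((j : ℤ) - (i : ℤ)) - b = (r : ℤ) * j - ((r : ℤ) * i + b) := by ring
      rw [hre2]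
      exact h5
    · intro hne b hbv hmod
      exfalso
      apply hne
      obtain ⟨t, ht⟩ := Int.modEq_iff_dvd.mp hmod
      have hbA : A i = γ ^ b * A j := by rw [hbv]; field_simp
      have main : ξ ^ (r * i) * (γ ^ b) ^ s = ξ ^ (r * j) := by
        rw [hξz (r * i), hξz (r * j), ← zpow_natCast (γ ^ b) s, ← zpow_mul, ← zpow_add₀ hγ0]
        apply (hzeq _ _).mpr
        rw [hls]
        push_cast
        exact ⟨-t, by linear_combination (-(s : ℤ)) * ht⟩
      rw [hbA, mul_pow, ← mul_assoc, main]
  rw [key]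
  constructor
  · intro hC i j hij hjl b hbv hmod
    exact (keyiff i j hij (by omega)).mpr (hC i j hij (by omega)) b hbv hmod
  · intro hR i j hij hjl
    exact (keyiff i j hij hjl).mp (hR i j hij (by omega))
end

section
/- Assume gcd(r, s) = 1 and A_i ≠ 0 for all i = 0, 1, …, l − 1. Then P(x) = x^r f(x^s) is a permutation polynomial over 𝔽_q if and only if the set { A_0^s, A_1^s·ξ^r, A_2^s·ξ^{2r}, …, A_{l−1}^s·ξ^{(l−1)r} } consists of l pairwise distinct elements and equals the set of all l-th roots of unity in 𝔽_q. -/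
/-- Assume `gcd(r,s) = 1` and all `A_i ≠ 0`. Then `P(x) = x^r f(x^s)`
is a permutation polynomial over `𝔽_q` iff the elements
`A_0^s, A_1^s ξ^r, …, A_{l-1}^s ξ^{(l-1)r}` are pairwise distinct and form exactly
the set of all `l`-th roots of unity in `𝔽_q`. -/
theorem stmt_5 (p m q : ℕ) (hp : p.Prime) (hm : 0 < m) (hq : q = p ^ m)
    (F : Type*) [Field F] [Fintype F] (hF : Fintype.card F = q)
    (l s : ℕ) (hl : 0 < l) (hs : 0 < s) (hls : q - 1 = l * s)
    (γ : F) (hγ : orderOf γ = q - 1)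
    (ξ : F) (hξ : ξ = γ ^ s)
    (f : Polynomial F) (r : ℕ) (hr : 0 < r)
    (A : ℕ → F) (hA : ∀ i, A i = f.eval (ξ ^ i))
    (hrs : Nat.gcd r s = 1)
    (hA0 : ∀ i ≤ l - 1, A i ≠ 0) :
    Function.Bijective (fun x : F => x ^ r * f.eval (x ^ s)) ↔
      (Set.InjOn (fun i : ℕ => A i ^ s * ξ ^ (i * r)) (Set.Iio l) ∧
       (fun i : ℕ => A i ^ s * ξ ^ (i * r)) '' (Set.Iio l) = {x : F | x ^ l = 1}) := by
  classical
  set P : F → F := fun x => x ^ r * f.eval (x ^ s) with hPdef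
  have hq1 : 0 < q - 1 := by
    rw [← hF]; exact Nat.sub_pos_of_lt Fintype.one_lt_card
  have hγpow : γ ^ (q - 1) = 1 := hγ ▸ pow_orderOf_eq_one γ
  have hγ0 : γ ≠ 0 := by
    intro h
    rw [h, zero_pow hq1.ne'] at hγpow
    exact zero_ne_one hγpow
  -- transfer of pow_eq_pow_iff_modEq to nonzero field elements
  have aux : ∀ x : F, x ≠ 0 → ∀ n k : ℕ, (x ^ n = x ^ k ↔ n ≡ k [MOD orderOf x]) := by
    intro x hx n k
    lift x to Fˣ using Ne.isUnit hx
    rw [← Units.val_pow_eq_pow_val, ← Units.val_pow_eq_pow_val, orderOf_units]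
    exact ⟨fun h => pow_eq_pow_iff_modEq.mp (Units.ext h),
      fun h => congrArg Units.val (pow_eq_pow_iff_modEq.mpr h)⟩
  -- every nonzero element is a power of γ
  have key2 : ∀ x : F, x ≠ 0 → ∃ n : ℕ, γ ^ n = x := by
    intro x hx
    set u : Fˣ := Units.mk0 γ hγ0 with hu
    have hou : orderOf u = q - 1 := by
      rw [← orderOf_units, hu, Units.val_mk0, hγ]
    have htop : Subgroup.zpowers u = ⊤ := by
      apply Subgroup.eq_top_of_card_eq
      rw [Nat.card_zpowers, hou, Nat.card_eq_fintype_card, Fintype.card_units, hF]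
    have hmem : Units.mk0 x hx ∈ Submonoid.powers u := by
      rw [mem_powers_iff_mem_zpowers, htop]
      trivial
    obtain ⟨n, hn⟩ := hmem
    refine ⟨n, ?_⟩
    have h5 := congrArg Units.val hn
    simpa [hu, Units.val_pow_eq_pow_val] using h5
  have key1 : ∀ x : F, x ≠ 0 → x ^ (l * s) = 1 := by
    intro x hx
    rw [← hls, ← hF]
    exact FiniteField.pow_card_sub_one_eq_one x hx
  have hξ0 : ξ ≠ 0 := hξ ▸ pow_ne_zero s hγ0
  have hξl : ξ ^ l = 1 := by
    rw [hξ, ← pow_mul, mul_comm s l, ← hls, hγpow]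
  have hξord : orderOf ξ = l := by
    rw [hξ, orderOf_pow' γ hs.ne', hγ, hls, Nat.gcd_eq_right (dvd_mul_left s l),
      Nat.mul_div_cancel _ hs]
  have memμ : ∀ y : F, y ^ l = 1 → ∃ i, i < l ∧ y = ξ ^ i := by
    intro y hy
    have hy0 : y ≠ 0 := by
      intro h; rw [h, zero_pow hl.ne'] at hy; exact zero_ne_one hy
    obtain ⟨k, hk⟩ := key2 y hy0
    have hdvd : orderOf γ ∣ k * l := orderOf_dvd_of_pow_eq_one (by rw [pow_mul, hk, hy])
    rw [hγ, hls] at hdvd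
    have hsk : s ∣ k := by
      have h2 : l * s ∣ l * k := by rwa [mul_comm k l] at hdvd
      exact (Nat.mul_dvd_mul_iff_left hl).mp h2
    obtain ⟨c, rfl⟩ := hsk
    refine ⟨c % l, Nat.mod_lt c hl, ?_⟩
    have h3 : ξ ^ (c % l) = ξ ^ c := by
      rw [aux ξ hξ0, hξord]
      exact Nat.mod_modEq c l
    rw [h3, ← hk, hξ, ← pow_mul]
  have fμ1 : ∀ i, i < l → f.eval (ξ ^ i) ≠ 0 := by
    intro i hi
    rw [← hA i]
    exact hA0 i (Nat.le_pred_of_lt hi)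
  have fnz : ∀ x : F, x ≠ 0 → f.eval (x ^ s) ≠ 0 := by
    intro x hx
    have h1 : (x ^ s) ^ l = 1 := by rw [← pow_mul, mul_comm s l]; exact key1 x hx
    obtain ⟨i, hi, hxi⟩ := memμ _ h1
    rw [hxi]; exact fμ1 i hi
  have hP0 : P 0 = 0 := by simp [hPdef, zero_pow hr.ne']
  have hPnz : ∀ x : F, x ≠ 0 → P x ≠ 0 := fun x hx =>
    mul_ne_zero (pow_ne_zero r hx) (fnz x hx)
  have hgs : ∀ x : F, (P x) ^ s = (x ^ s) ^ r * f.eval (x ^ s) ^ s := by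
    intro x
    rw [hPdef]
    simp only
    rw [mul_pow, ← pow_mul, ← pow_mul, mul_comm r s]
  have hhg : ∀ i : ℕ, A i ^ s * ξ ^ (i * r) = (ξ ^ i) ^ r * f.eval (ξ ^ i) ^ s := by
    intro i
    rw [hA i, ← pow_mul, mul_comm]
  -- surjectivity of η ↦ η^r on s-th roots of unity
  have hη : ∀ ζ : F, ζ ^ s = 1 → ∃ η : F, η ^ s = 1 ∧ η ^ r = ζ := by
    intro ζ hζ
    haveI : NeZero s := ⟨hs.ne'⟩
    set k : ℕ := ((r : ZMod s)⁻¹).val with hk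
    have hmod : k * r ≡ 1 [MOD s] := by
      rw [← ZMod.natCast_eq_natCast_iff]
      push_cast
      rw [hk, ZMod.natCast_val, ZMod.cast_id, mul_comm]
      exact ZMod.coe_mul_inv_eq_one r hrs
    have hζ0 : ζ ≠ 0 := by
      intro h; rw [h, zero_pow hs.ne'] at hζ; exact zero_ne_one hζ
    refine ⟨ζ ^ k, ?_, ?_⟩
    · rw [← pow_mul, mul_comm, pow_mul, hζ, one_pow]
    · rw [← pow_mul]
      have hd : orderOf ζ ∣ s := orderOf_dvd_of_pow_eq_one hζ
      have := (aux ζ hζ0 (k * r) 1).mpr (Nat.ModEq.of_dvd hd hmod)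
      simpa using this
  have ord1 : ∀ η : F, η ^ s = 1 → η ^ r = 1 → η = 1 := by
    intro η h1 h2
    have d1 : orderOf η ∣ s := orderOf_dvd_of_pow_eq_one h1
    have d2 : orderOf η ∣ r := orderOf_dvd_of_pow_eq_one h2
    have : orderOf η ∣ 1 := hrs ▸ Nat.dvd_gcd d2 d1
    exact orderOf_eq_one_iff.mp (Nat.dvd_one.mp this)
  have hγs : ∀ i : ℕ, (γ ^ i) ^ s = ξ ^ i := by
    intro i
    rw [← pow_mul, mul_comm, pow_mul, ← hξ]
  constructor
  · rintro ⟨hinj, hsurj⟩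
    constructor
    · -- injectivity of i ↦ A i ^ s * ξ ^ (i r) on Iio l
      intro i hi j hj hij
      simp only [Set.mem_Iio] at hi hj
      simp only at hij
      rw [hhg i, hhg j] at hij
      have hp1 : P (γ ^ i) ≠ 0 := hPnz _ (pow_ne_zero _ hγ0)
      have hp2 : P (γ ^ j) ≠ 0 := hPnz _ (pow_ne_zero _ hγ0)
      have h1 : (P (γ ^ i)) ^ s = (P (γ ^ j)) ^ s := by
        rw [hgs, hgs, hγs, hγs, hij]
      have hζs : (P (γ ^ i) / P (γ ^ j)) ^ s = 1 := by
        rw [div_pow, h1, div_self (pow_ne_zero _ hp2)]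
      obtain ⟨η, hηs, hηr⟩ := hη _ hζs
      have hPx2' : P (η * γ ^ j) = P (γ ^ i) := by
        rw [hPdef]
        simp only
        rw [mul_pow, mul_pow, hηs, one_mul, hηr, mul_assoc,
          div_mul_eq_mul_div, div_eq_iff hp2]
      have heq : η * γ ^ j = γ ^ i := hinj hPx2'
      have hξij : ξ ^ i = ξ ^ j := by
        rw [← hγs, ← heq, mul_pow, hηs, one_mul, hγs]
      have hmm := (aux ξ hξ0 i j).mp hξij
      rw [hξord] at hmm
      have : i % l = j % l := hmm
      rwa [Nat.mod_eq_of_lt hi, Nat.mod_eq_of_lt hj] at this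
    · -- image equals the l-th roots of unity
      apply Set.Subset.antisymm
      · rintro z ⟨i, hi, rfl⟩
        simp only [Set.mem_Iio] at hi
        have h1 : A i ^ (s * l) = 1 := by
          rw [mul_comm]; exact key1 _ (hA0 i (Nat.le_pred_of_lt hi))
        have h2 : ξ ^ (i * r * l) = 1 := by
          rw [mul_comm, pow_mul, hξl, one_pow]
        show (A i ^ s * ξ ^ (i * r)) ^ l = 1
        rw [mul_pow, ← pow_mul, ← pow_mul, h1, h2, one_mul]
      · intro z hz
        obtain ⟨j, hj, rfl⟩ := memμ z hz
        obtain ⟨x, hx⟩ := hsurj (γ ^ j)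
        have hx0 : x ≠ 0 := by
          intro h
          rw [h] at hx
          exact pow_ne_zero j hγ0 (by rw [← hx, hP0])
        have hxsl : (x ^ s) ^ l = 1 := by
          rw [← pow_mul, mul_comm s l]; exact key1 x hx0
        obtain ⟨i, hi, hxi⟩ := memμ (x ^ s) hxsl
        refine ⟨i, Set.mem_Iio.mpr hi, ?_⟩
        simp only
        rw [hhg i, ← hxi, ← hgs, hx, hγs]
  · rintro ⟨hInj, -⟩
    rw [← Finite.injective_iff_bijective]
    intro x1 x2 hx
    have hx' : P x1 = P x2 := hx
    by_cases h1 : x1 = 0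
    · by_cases h2 : x2 = 0
      · rw [h1, h2]
      · exfalso
        apply hPnz x2 h2
        rw [← hx', h1, hP0]
    · by_cases h2 : x2 = 0
      · exfalso
        apply hPnz x1 h1
        rw [hx', h2, hP0]
      · have hs1 : (x1 ^ s) ^ l = 1 := by
          rw [← pow_mul, mul_comm s l]; exact key1 x1 h1
        have hs2 : (x2 ^ s) ^ l = 1 := by
          rw [← pow_mul, mul_comm s l]; exact key1 x2 h2
        obtain ⟨i, hi, hxi⟩ := memμ _ hs1
        obtain ⟨j, hj, hxj⟩ := memμ _ hs2
        have heq : A i ^ s * ξ ^ (i * r) = A j ^ s * ξ ^ (j * r) := by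
          rw [hhg i, hhg j, ← hxi, ← hxj, ← hgs, ← hgs, hx']
        have hij : i = j := hInj (Set.mem_Iio.mpr hi) (Set.mem_Iio.mpr hj) heq
        have hss : x1 ^ s = x2 ^ s := by rw [hxi, hxj, hij]
        have hfz : f.eval (x1 ^ s) ≠ 0 := fnz x1 h1
        have hrr : x1 ^ r = x2 ^ r := by
          have h3 : x1 ^ r * f.eval (x1 ^ s) = x2 ^ r * f.eval (x1 ^ s) := by
            have := hx'
            rw [hPdef] at this
            simp only at this
            rw [this, hss]
          exact mul_right_cancel₀ hfz h3
        have hη1 : (x1 / x2) ^ s = 1 := by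
          rw [div_pow, hss, div_self (pow_ne_zero _ h2)]
        have hη2 : (x1 / x2) ^ r = 1 := by
          rw [div_pow, hrr, div_self (pow_ne_zero _ h2)]
        have := ord1 _ hη1 hη2
        exact (div_eq_one_iff_eq h2).mp this
end

section
/- Assume gcd(r, s) = 1 and A_i ≠ 0 for all i = 0, 1, …, l − 1. Then P(x) = x^r f(x^s) is a permutation polynomial over 𝔽_q if and only if for all i, j with 0 ≤ i < j ≤ l − 1, the element (A_i · γ^{ir}) · (A_j · γ^{jr})^{−1} is not an l-th power in 𝔽_q^*; equivalently, the elements A_0, A_1·γ^r, A_2·γ^{2r}, …, A_{l−1}·γ^{(l−1)r} lie in pairwise distinct cosets of the subgroup C_0 of l-th powers in 𝔽_q^*. -/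
/-- Assume `gcd(r,s) = 1` and all `A_i ≠ 0`. Then `P(x) = x^r f(x^s)`
is a permutation polynomial over `𝔽_q` iff for all `0 ≤ i < j ≤ l-1`, the element
`(A_i γ^{ir}) · (A_j γ^{jr})⁻¹` is not an `l`-th power in `𝔽_q^*`; i.e. the elements
`A_0, A_1 γ^r, …, A_{l-1} γ^{(l-1)r}` lie in pairwise distinct cosets of the subgroup
`C_0` of `l`-th powers. -/
theorem stmt_7 (p m q : ℕ) (hp : p.Prime) (hm : 0 < m) (hq : q = p ^ m)
    (F : Type*) [Field F] [Fintype F] (hF : Fintype.card F = q)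
    (l s : ℕ) (hl : 0 < l) (hs : 0 < s) (hls : q - 1 = l * s)
    (γ : F) (hγ : orderOf γ = q - 1)
    (ξ : F) (hξ : ξ = γ ^ s)
    (f : Polynomial F) (r : ℕ) (hr : 0 < r)
    (A : ℕ → F) (hA : ∀ i, A i = f.eval (ξ ^ i))
    (hrs : Nat.gcd r s = 1)
    (hA0 : ∀ i ≤ l - 1, A i ≠ 0) :
    Function.Bijective (fun x : F => x ^ r * f.eval (x ^ s)) ↔
      ∀ i j : ℕ, i < j → j ≤ l - 1 →
        ¬ ∃ y : F, y ≠ 0 ∧ (A i * γ ^ (i * r)) * (A j * γ ^ (j * r))⁻¹ = y ^ l := by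
  classical
  set P : F → F := fun x : F => x ^ r * f.eval (x ^ s) with hPdef
  -- basic facts
  have hq1 : 1 < q := by subst hq; exact Nat.one_lt_pow hm.ne' hp.one_lt
  have hn : 0 < q - 1 := by omega
  have hγ1 : γ ^ (q - 1) = 1 := by rw [← hγ]; exact pow_orderOf_eq_one γ
  have hγ0 : γ ≠ 0 := by
    rintro rfl
    rw [zero_pow hn.ne'] at hγ1
    exact one_ne_zero hγ1.symm
  set γu : Fˣ := Units.mk0 γ hγ0 with hγu
  have hγuv : (γu : F) = γ := rfl
  have horder : orderOf γu = q - 1 := by rw [← orderOf_units, hγuv, hγ]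
  have htop : Subgroup.zpowers γu = ⊤ := by
    apply Subgroup.eq_top_of_card_eq
    rw [Nat.card_zpowers, horder, Nat.card_eq_fintype_card, Fintype.card_units, hF]
  have hgen : ∀ x : F, x ≠ 0 → ∃ k : ℕ, x = γ ^ k := by
    intro x hx
    have hmem : Units.mk0 x hx ∈ Subgroup.zpowers γu := htop ▸ Subgroup.mem_top _
    rw [← mem_powers_iff_mem_zpowers] at hmem
    obtain ⟨k, hk⟩ := hmem
    refine ⟨k, ?_⟩
    have := congrArg Units.val hk
    simpa [Units.val_pow_eq_pow_val, hγuv] using this.symm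
  have hpow_iff : ∀ a b : ℕ, γ ^ a = γ ^ b ↔ a ≡ b [MOD q - 1] := by
    intro a b
    constructor
    · intro h
      have h' : γu ^ a = γu ^ b :=
        Units.ext (by simpa [Units.val_pow_eq_pow_val, hγuv] using h)
      simpa [horder] using pow_eq_pow_iff_modEq.mp h'
    · intro h
      have h' : γu ^ a = γu ^ b := pow_eq_pow_iff_modEq.mpr (by simpa [horder] using h)
      simpa [Units.val_pow_eq_pow_val, hγuv] using congrArg Units.val h'
  have hξl : ξ ^ l = 1 := by
    rw [hξ, ← pow_mul, mul_comm s l, ← hls, hγ1]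
  have hAmod : ∀ k : ℕ, A k = A (k % l) := by
    intro k
    rw [hA, hA]
    congr 1
    conv_lhs => rw [← Nat.div_add_mod k l]
    rw [pow_add, pow_mul, hξl, one_pow, one_mul]
  have hA0' : ∀ k : ℕ, A k ≠ 0 := by
    intro k
    rw [hAmod k]
    exact hA0 _ (by have := Nat.mod_lt k hl; omega)
  have hPeval : ∀ k : ℕ, P (γ ^ k) = γ ^ (k * r) * A k := by
    intro k
    show (γ ^ k) ^ r * f.eval ((γ ^ k) ^ s) = _
    rw [← pow_mul, ← pow_mul, show k * s = s * k from mul_comm k s, pow_mul γ s k, ← hξ, ← hA k]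
  -- construction of an l-th power witness from a collision of P-values
  have mkY : ∀ a b : ℕ, A a * γ ^ (a * r) = A b * γ ^ (b * r) →
      ∃ y : F, y ≠ 0 ∧
        (A (a % l) * γ ^ ((a % l) * r)) * (A (b % l) * γ ^ ((b % l) * r))⁻¹ = y ^ l := by
    intro a b heq
    have hbj := Nat.div_add_mod b l
    have hai := Nat.div_add_mod a l
    have hbjz : (l : ℤ) * ((b / l : ℕ) : ℤ) + ((b % l : ℕ) : ℤ) = b := by exact_mod_cast hbj
    have haiz : (l : ℤ) * ((a / l : ℕ) : ℤ) + ((a % l : ℕ) : ℤ) = a := by exact_mod_cast hai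
    have hw : ((b : ℤ) - a + (a % l : ℕ) - (b % l : ℕ)) = l * ((b / l : ℕ) - (a / l : ℕ)) := by
      linear_combination haiz - hbjz
    set w : ℤ := ((b / l : ℕ) - (a / l : ℕ)) with hwdef
    refine ⟨((γu ^ ((r : ℤ) * w) : Fˣ) : F), Units.ne_zero _, ?_⟩
    have hyl : ((γu ^ ((r : ℤ) * w)) ^ l) * γu ^ (a * r) * γu ^ ((b % l) * r)
        = γu ^ (b * r) * γu ^ ((a % l) * r) := by
      rw [← zpow_natCast (γu ^ ((r : ℤ) * w)) l, ← zpow_mul,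
        ← zpow_natCast γu (a * r), ← zpow_natCast γu ((b % l) * r),
        ← zpow_natCast γu (b * r), ← zpow_natCast γu ((a % l) * r),
        ← zpow_add, ← zpow_add, ← zpow_add]
      congr 1
      simp only [Nat.cast_mul]
      linear_combination (-(r : ℤ)) * hw
    have hylF : ((γu ^ ((r : ℤ) * w) : Fˣ) : F) ^ l * γ ^ (a * r) * γ ^ ((b % l) * r)
        = γ ^ (b * r) * γ ^ ((a % l) * r) := by
      have := congrArg Units.val hyl
      simpa [Units.val_mul, Units.val_pow_eq_pow_val, hγuv] using this
    have hAj : A (b % l) ≠ 0 := hA0' _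
    have hgj : γ ^ ((b % l) * r) ≠ 0 := pow_ne_zero _ hγ0
    have hga : γ ^ (a * r) ≠ 0 := pow_ne_zero _ hγ0
    rw [← div_eq_mul_inv, div_eq_iff (mul_ne_zero hAj hgj)]
    apply mul_right_cancel₀ hga
    calc A (a % l) * γ ^ ((a % l) * r) * γ ^ (a * r)
        = (A a * γ ^ (a * r)) * γ ^ ((a % l) * r) := by rw [hAmod a]; ring
      _ = (A b * γ ^ (b * r)) * γ ^ ((a % l) * r) := by rw [heq]
      _ = A (b % l) * (γ ^ (b * r) * γ ^ ((a % l) * r)) := by rw [hAmod b]; ring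
      _ = A (b % l) * (((γu ^ ((r : ℤ) * w) : Fˣ) : F) ^ l * γ ^ (a * r) * γ ^ ((b % l) * r)) := by
          rw [hylF]
      _ = ((γu ^ ((r : ℤ) * w) : Fˣ) : F) ^ l * (A (b % l) * γ ^ ((b % l) * r)) * γ ^ (a * r) := by
          ring
  constructor
  · -- bijective → condition
    rintro hbij i j hij hjl ⟨y, hy0, hy⟩
    obtain ⟨t, rfl⟩ := hgen y hy0
    have hAjg : A j * γ ^ (j * r) ≠ 0 := mul_ne_zero (hA0' j) (pow_ne_zero _ hγ0)
    rw [← div_eq_mul_inv, div_eq_iff hAjg] at hy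
    haveI : NeZero s := ⟨hs.ne'⟩
    obtain ⟨u, hu⟩ : ∃ u : ℕ, u * r ≡ t [MOD s] := by
      refine ⟨((t : ZMod s) * ((ZMod.unitOfCoprime r hrs)⁻¹ : (ZMod s)ˣ)).val, ?_⟩
      have h1 : ((((t : ZMod s) * ((ZMod.unitOfCoprime r hrs)⁻¹ : (ZMod s)ˣ)).val * r : ℕ) : ZMod s)
          = ((t : ℕ) : ZMod s) := by
        push_cast [ZMod.natCast_val, ZMod.cast_id]
        rw [mul_assoc]
        have : (((ZMod.unitOfCoprime r hrs)⁻¹ : (ZMod s)ˣ) : ZMod s) * (r : ZMod s) = 1 := by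
          rw [← ZMod.coe_unitOfCoprime r hrs]
          exact Units.inv_mul _
        rw [this, mul_one]
      exact (ZMod.natCast_eq_natCast_iff _ _ _).mp h1
    have hjl' : j < l := by omega
    have hil' : i < l := by omega
    have hmod : l * (u * r) ≡ l * t [MOD q - 1] := by
      rw [hls]; exact hu.mul_left' l
    have h3 : (j + l * u) * r ≡ j * r + t * l [MOD q - 1] := by
      have he : (j + l * u) * r = j * r + l * (u * r) := by ring
      rw [he, mul_comm t l]
      exact (Nat.ModEq.refl (j * r)).add hmod
    have hexp : γ ^ ((j + l * u) * r) = γ ^ (j * r + t * l) := (hpow_iff _ _).mpr h3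
    have hPj : P (γ ^ (j + l * u)) = P (γ ^ i) := by
      rw [hPeval, hPeval]
      have hmj : A (j + l * u) = A j := by
        rw [hAmod (j + l * u), Nat.add_mul_mod_self_left, Nat.mod_eq_of_lt hjl']
      rw [hmj]
      calc γ ^ ((j + l * u) * r) * A j
          = γ ^ (j * r + t * l) * A j := by rw [hexp]
        _ = (γ ^ t) ^ l * (A j * γ ^ (j * r)) := by rw [pow_add, pow_mul]; ring
        _ = A i * γ ^ (i * r) := hy.symm
        _ = γ ^ (i * r) * A i := mul_comm _ _
    have hgeq : γ ^ (j + l * u) = γ ^ i := hbij.injective hPj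
    have hmm : (j + l * u) ≡ i [MOD q - 1] := (hpow_iff _ _).mp hgeq
    have hmml : (j + l * u) ≡ i [MOD l] := hmm.of_dvd ⟨s, hls⟩
    have h4 : (j + l * u) % l = i % l := hmml
    rw [Nat.add_mul_mod_self_left, Nat.mod_eq_of_lt hjl', Nat.mod_eq_of_lt hil'] at h4
    omega
  · -- condition → bijective
    intro hC
    rw [← Finite.injective_iff_bijective]
    have hP0 : P 0 = 0 := by simp [hPdef, zero_pow hr.ne']
    have hPne : ∀ x : F, x ≠ 0 → P x ≠ 0 := by
      intro x hx
      obtain ⟨k, rfl⟩ := hgen x hx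
      rw [hPeval k]
      exact mul_ne_zero (pow_ne_zero _ hγ0) (hA0' k)
    intro x x' hxx'
    rcases eq_or_ne x 0 with rfl | hx
    · rcases eq_or_ne x' 0 with rfl | hx'
      · rfl
      · exact absurd (by rw [← hxx', hP0]) (hPne x' hx')
    rcases eq_or_ne x' 0 with rfl | hx'
    · exact absurd (by rw [hxx', hP0]) (hPne x hx)
    obtain ⟨a, rfl⟩ := hgen x hx
    obtain ⟨b, rfl⟩ := hgen x' hx'
    rw [hPeval, hPeval] at hxx'
    have heq : A a * γ ^ (a * r) = A b * γ ^ (b * r) := by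
      rw [mul_comm, hxx', mul_comm]
    rcases lt_trichotomy (a % l) (b % l) with hlt | heqm | hgt
    · exact absurd (mkY a b heq)
        (hC _ _ hlt (by have := Nat.mod_lt b hl; omega))
    · have hAab : A a = A b := by rw [hAmod a, hAmod b, heqm]
      have hg : γ ^ (a * r) = γ ^ (b * r) := by
        rw [hAab] at hxx'
        exact mul_right_cancel₀ (hA0' b) hxx'
      have hmod : a * r ≡ b * r [MOD q - 1] := (hpow_iff _ _).mp hg
      have hab : a ≡ b [MOD q - 1] := by
        rw [hls] at hmod ⊢
        rw [Nat.modEq_iff_dvd] at hmod ⊢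
        push_cast at hmod ⊢
        have hl0 : (l : ℤ) ≠ 0 := by exact_mod_cast hl.ne'
        have hdl : (l : ℤ) ∣ (b : ℤ) - a := by
          refine ⟨((b / l : ℕ) : ℤ) - ((a / l : ℕ) : ℤ), ?_⟩
          have hbjz : (l : ℤ) * ((b / l : ℕ) : ℤ) + ((b % l : ℕ) : ℤ) = b := by
            exact_mod_cast Nat.div_add_mod b l
          have haiz : (l : ℤ) * ((a / l : ℕ) : ℤ) + ((a % l : ℕ) : ℤ) = a := by
            exact_mod_cast Nat.div_add_mod a l
          have hmz : ((a % l : ℕ) : ℤ) = ((b % l : ℕ) : ℤ) := by exact_mod_cast heqm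
          linear_combination haiz - hbjz - hmz
        obtain ⟨c, hc⟩ := hdl
        have h2 : (l : ℤ) * s ∣ (l : ℤ) * (c * r) := by
          have he : (b : ℤ) * r - (a : ℤ) * r = (l : ℤ) * (c * r) := by
            linear_combination (r : ℤ) * hc
          rw [← he]
          exact hmod
        have hsr : (s : ℤ) ∣ c * r := (mul_dvd_mul_iff_left hl0).mp h2
        have hco : IsCoprime (s : ℤ) (r : ℤ) := Nat.isCoprime_iff_coprime.mpr (Nat.Coprime.symm hrs)
        have hsc : (s : ℤ) ∣ c := hco.dvd_of_dvd_mul_right hsr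
        obtain ⟨d, hd⟩ := hsc
        exact ⟨d, by rw [hc, hd]; ring⟩
      exact (hpow_iff a b).mpr hab
    · exact absurd (mkY b a heq.symm)
        (hC _ _ hgt (by have := Nat.mod_lt a hl; omega))
end

section
/- Suppose q − 1 = 3s for a positive integer s, and let f(x) = a·x^2 + b·x + c ∈ 𝔽_q[x] with a^2 + b^2 + c^2 − ab − bc − ca = 1. Let r be a positive integer and set A_i = f(ξ^i) for i = 0, 1, 2, where ξ = γ^s is a primitive cube root of unity. Then P(x) = x^r f(x^s) is a permutation polynomial over 𝔽_q if and only if: gcd(r, s) = 1, A_i ≠ 0 for i = 0, 1, 2, A_0^s = 1, 3 divides Ind_γ(A_0) (i.e., for every integer b with γ^b = A_0, 3 ∣ b), and 3 does not divide r + Ind_γ(A_2^2) (i.e., for every integer b with γ^b = A_2^2, 3 ∤ (r + b)). -/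
open Polynomial

lemma aux_decide (u w v1 v2 : ZMod 3) (h : v1 + v2 = 0) :
    Function.Injective (fun i : ZMod 3 => u * i +
      (if i.val = 0 then w else if i.val = 1 then v1 else v2)) ↔ (w = 0 ∧ u + 2 * v2 ≠ 0) := by
  revert h; revert u w v1 v2; decide

lemma aux_NT (s r : ℕ) (hs : 0 < s) (α : ZMod 3 → ZMod (3*s)) :
    Function.Injective (fun k : ZMod (3*s) =>
        (r : ZMod (3*s)) * k + α (ZMod.castHom ⟨s, rfl⟩ (ZMod 3) k))
    ↔ (Nat.gcd r s = 1 ∧ Function.Injective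
        (fun i : ZMod 3 => (r : ZMod 3) * i + ZMod.castHom ⟨s, rfl⟩ (ZMod 3) (α i))) := by
  haveI : NeZero (3*s) := ⟨by omega⟩
  have hcast : ∀ (K : ℕ), ZMod.castHom (⟨s, rfl⟩ : (3:ℕ) ∣ 3*s) (ZMod 3) (K : ZMod (3*s))
      = (K : ZMod 3) := by
    intro K; simp [map_natCast]
  have hval : ∀ k : ZMod (3*s), ((k.val : ℕ) : ZMod (3*s)) = k := by
    intro k; simp [ZMod.natCast_val, ZMod.cast_id]
  constructor
  · intro hinj
    constructor
    · by_contra hd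
      have hds : Nat.gcd r s ∣ s := Nat.gcd_dvd_right r s
      have hdr : Nat.gcd r s ∣ r := Nat.gcd_dvd_left r s
      have hd0 : 0 < Nat.gcd r s := Nat.gcd_pos_of_pos_right _ hs
      have hd2 : 2 ≤ Nat.gcd r s := by omega
      set g := Nat.gcd r s with hg
      obtain ⟨s₁, hs₁⟩ := hds
      obtain ⟨r₁, hr₁⟩ := hdr
      have hs₁pos : 0 < s₁ := by
        rcases Nat.eq_zero_or_pos s₁ with h | h
        · subst h; simp at hs₁; omega
        · exact h
      have hs₁lt : s₁ < s := by nlinarith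
      have key : ((3*s₁ : ℕ) : ZMod (3*s)) = ((0 : ℕ) : ZMod (3*s)) := by
        apply hinj
        simp only [hcast, Nat.cast_zero]
        have h1 : (r : ZMod (3*s)) * ((3*s₁ : ℕ) : ZMod (3*s)) = 0 := by
          rw [show (r : ZMod (3*s)) * ((3*s₁ : ℕ) : ZMod (3*s)) = ((r * (3*s₁) : ℕ) : ZMod (3*s)) by push_cast; ring]
          rw [ZMod.natCast_eq_zero_iff]
          exact ⟨r₁, by rw [hr₁, hs₁]; ring⟩
        have h2 : ((3*s₁ : ℕ) : ZMod 3) = 0 := by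
          rw [ZMod.natCast_eq_zero_iff]; exact ⟨s₁, rfl⟩
        rw [h1, h2]
        simp
      rw [Nat.cast_zero, ZMod.natCast_eq_zero_iff] at key
      have := Nat.le_of_dvd (by omega) key
      omega
    · rw [Finite.injective_iff_surjective]
      have hsurj := Finite.injective_iff_surjective.mp hinj
      intro j
      obtain ⟨k, hk⟩ := hsurj ((j.val : ZMod (3*s)))
      refine ⟨ZMod.castHom ⟨s, rfl⟩ (ZMod 3) k, ?_⟩
      have h := congrArg (ZMod.castHom (⟨s, rfl⟩ : (3:ℕ) ∣ 3*s) (ZMod 3)) hk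
      simp only [map_add, map_mul, map_natCast] at h
      simpa [ZMod.natCast_val, ZMod.cast_id] using h
  · rintro ⟨hgcd, hinjbar⟩ k k' hkk
    simp only at hkk
    have hbar := congrArg (ZMod.castHom (⟨s, rfl⟩ : (3:ℕ) ∣ 3*s) (ZMod 3)) hkk
    simp only [map_add, map_mul, map_natCast] at hbar
    have hkey : ZMod.castHom (⟨s, rfl⟩ : (3:ℕ) ∣ 3*s) (ZMod 3) k
        = ZMod.castHom ⟨s, rfl⟩ (ZMod 3) k' := hinjbar hbar
    have hrk : (r : ZMod (3*s)) * k = (r : ZMod (3*s)) * k' := by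
      rw [hkey] at hkk
      exact add_right_cancel hkk
    have h1 : r * k.val ≡ r * k'.val [MOD 3*s] := by
      rw [← ZMod.natCast_eq_natCast_iff]
      push_cast
      rw [hval k, hval k']
      exact hrk
    have h2 : k.val ≡ k'.val [MOD 3] := by
      rw [← ZMod.natCast_eq_natCast_iff]
      rw [← hcast k.val, ← hcast k'.val, hval k, hval k', hkey]
    rw [Nat.modEq_iff_dvd] at h1 h2
    obtain ⟨e, he⟩ := h2
    obtain ⟨t, ht⟩ := h1
    have h3 : (3:ℤ) * ((r:ℤ) * e) = 3 * ((s:ℤ) * t) := by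
      push_cast at ht he ⊢
      linear_combination ht - (r:ℤ) * he
    have h4 : (s:ℤ) ∣ (r:ℤ) * e := ⟨t, mul_left_cancel₀ (by norm_num) h3⟩
    have hcop : IsCoprime (s:ℤ) (r:ℤ) := by
      rw [Int.isCoprime_iff_gcd_eq_one, Int.gcd_natCast_natCast, Nat.gcd_comm]
      exact hgcd
    have hse : (s:ℤ) ∣ e := hcop.dvd_of_dvd_mul_left h4
    obtain ⟨e₁, he₁⟩ := hse
    have hfin : ((3*s : ℕ) : ℤ) ∣ ((k'.val : ℤ) - k.val) := ⟨e₁, by push_cast; rw [he, he₁]; ring⟩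
    have hmod : k.val ≡ k'.val [MOD 3*s] := (Nat.modEq_iff_dvd).mpr (by exact_mod_cast hfin)
    have hlt := ZMod.val_lt k
    have hlt' := ZMod.val_lt k'
    have hv : k.val = k'.val := by
      have h5 := hmod
      rw [Nat.ModEq, Nat.mod_eq_of_lt hlt, Nat.mod_eq_of_lt hlt'] at h5
      exact h5
    exact ZMod.val_injective _ hv

/-- Suppose `q - 1 = 3s`, and `f(x) = a x^2 + b x + c` with
`a² + b² + c² - ab - bc - ca = 1`. Then `P(x) = x^r f(x^s)` is a permutation
polynomial over `𝔽_q` iff `gcd(r,s) = 1`, `A_i ≠ 0` for `i = 0,1,2`, `A_0^s = 1`,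
`3 ∣ Ind_γ(A_0)`, and `3 ∤ r + Ind_γ(A_2²)`. -/
theorem stmt_8 (p m q : ℕ) (hp : p.Prime) (hm : 0 < m) (hq : q = p ^ m)
    (F : Type*) [Field F] [Fintype F] (hF : Fintype.card F = q)
    (s : ℕ) (hs : 0 < s) (hls : q - 1 = 3 * s)
    (γ : F) (hγ : orderOf γ = q - 1)
    (ξ : F) (hξ : ξ = γ ^ s)
    (a b c : F) (habc : a ^ 2 + b ^ 2 + c ^ 2 - a * b - b * c - c * a = 1)
    (f : Polynomial F) (hf : f = C a * X ^ 2 + C b * X + C c)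
    (r : ℕ) (hr : 0 < r)
    (A : ℕ → F) (hA : ∀ i, A i = f.eval (ξ ^ i)) :
    Function.Bijective (fun x : F => x ^ r * f.eval (x ^ s)) ↔
      (Nat.gcd r s = 1 ∧
       (∀ i ≤ 2, A i ≠ 0) ∧
       A 0 ^ s = 1 ∧
       (∀ b' : ℤ, γ ^ b' = A 0 → (3 : ℤ) ∣ b') ∧
       (∀ b' : ℤ, γ ^ b' = A 2 ^ 2 → ¬ (3 : ℤ) ∣ ((r : ℤ) + b'))) := by
  haveI : NeZero (3*s) := ⟨by omega⟩
  haveI : DecidableEq F := Classical.decEq F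
  set g : F → F := fun x : F => x ^ r * f.eval (x ^ s) with hg
  -- basic facts
  have hn : orderOf γ = 3 * s := by rw [hγ, hls]
  have hγpow : γ ^ (3*s) = 1 := by rw [← hn]; exact pow_orderOf_eq_one γ
  have hγ0 : γ ≠ 0 := by
    rintro rfl
    rw [zero_pow (by omega : 3*s ≠ 0)] at hγpow
    exact zero_ne_one hγpow
  have hξ3 : ξ ^ 3 = 1 := by
    rw [hξ, ← pow_mul, mul_comm]; exact hγpow
  have hξne1 : ξ ≠ 1 := by
    rw [hξ]
    intro h
    have := orderOf_dvd_of_pow_eq_one h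
    rw [hn] at this
    have := Nat.le_of_dvd hs this
    omega
  have hξsum : ξ ^ 2 + ξ + 1 = 0 := by
    have h1 : (ξ - 1) * (ξ ^ 2 + ξ + 1) = 0 := by linear_combination hξ3
    rcases mul_eq_zero.mp h1 with h | h
    · exact absurd (sub_eq_zero.mp h) hξne1
    · exact h
  have hA12 : A 1 * A 2 = 1 := by
    rw [hA, hA, hf]
    simp only [eval_add, eval_mul, eval_pow, eval_C, eval_X]
    linear_combination (a^2*ξ^4 + (a*b-a^2)*ξ^3 + a*c*ξ^2 + (a^2-a*b+b^2-a*c)*ξ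
      + (a*b+a*c+b*c-a^2-b^2)) * hξsum + habc
  -- generator facts
  set u : Fˣ := Units.mk0 γ hγ0 with hudef
  have huval : (u : F) = γ := rfl
  have hu : orderOf u = 3 * s := by rw [← orderOf_units, huval, hn]
  have hgen : ∀ x : F, x ≠ 0 → ∃ K : ℕ, γ ^ K = x := by
    intro x hx
    have htop : Subgroup.zpowers u = ⊤ := by
      apply Subgroup.eq_top_of_card_eq
      rw [Nat.card_zpowers, hu, Nat.card_eq_fintype_card, Fintype.card_units, hF, hls]
    have hxmem : (Units.mk0 x hx) ∈ Subgroup.zpowers u := by rw [htop]; trivial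
    obtain ⟨K, hK⟩ := (mem_powers_iff_mem_zpowers).mpr hxmem
    refine ⟨K, ?_⟩
    have := congrArg Units.val hK
    simpa [Units.val_pow_eq_pow_val, huval] using this
  have hpoweq : ∀ K K' : ℕ, γ ^ K = γ ^ K' ↔ K ≡ K' [MOD 3*s] := by
    intro K K'
    rw [← hu, ← pow_eq_pow_iff_modEq (x := u)]
    constructor
    · intro hh; exact Units.ext (by simpa [Units.val_pow_eq_pow_val, huval] using hh)
    · intro hh
      have := congrArg Units.val hh
      simpa [Units.val_pow_eq_pow_val, huval] using this
  have hpowone : ∀ K : ℕ, γ ^ K = 1 ↔ 3*s ∣ K := by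
    intro K; rw [← orderOf_dvd_iff_pow_eq_one, hn]
  -- evaluation of g on powers of γ
  have heval : ∀ K : ℕ, g (γ ^ K) = γ ^ (r * K) * A (K % 3) := by
    intro K
    have h1 : (γ ^ K) ^ s = ξ ^ (K % 3) := by
      calc (γ ^ K) ^ s = ξ ^ K := by rw [← pow_mul, mul_comm, pow_mul, ← hξ]
        _ = (ξ ^ 3) ^ (K / 3) * ξ ^ (K % 3) := by
            rw [← pow_mul, ← pow_add]; congr 1; omega
        _ = ξ ^ (K % 3) := by rw [hξ3, one_pow, one_mul]
    rw [hg]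
    simp only
    rw [h1, ← hA, ← pow_mul, mul_comm K r]
  -- zpow equality transfer
  have hzpow : ∀ (b₁ b₂ : ℤ), γ ^ b₁ = γ ^ b₂ → (3:ℤ) ∣ b₂ - b₁ := by
    intro b₁ b₂ hb
    have hb' : u ^ b₁ = u ^ b₂ := by
      apply Units.ext
      rw [Units.val_zpow_eq_zpow_val, Units.val_zpow_eq_zpow_val, huval]
      exact hb
    have := (zpow_eq_zpow_iff_modEq.mp hb')
    rw [hu] at this
    have hd : ((3*s : ℕ) : ℤ) ∣ b₂ - b₁ := Int.ModEq.dvd this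
    exact dvd_trans (by exact_mod_cast Dvd.intro s rfl) hd
  by_cases hA0 : ∀ i ≤ 2, A i ≠ 0
  · -- all values nonzero
    obtain ⟨a0, ha0⟩ := hgen (A 0) (hA0 0 (by omega))
    obtain ⟨a1, ha1⟩ := hgen (A 1) (hA0 1 (by omega))
    obtain ⟨a2, ha2⟩ := hgen (A 2) (hA0 2 (by omega))
    set α' : ℕ → ℕ := fun i => if i = 0 then a0 else if i = 1 then a1 else a2 with hα'def
    have hα' : ∀ i < 3, γ ^ α' i = A i := by
      intro i hi
      interval_cases i
      · simpa [α'] using ha0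
      · simpa [α'] using ha1
      · simpa [α'] using ha2
    set αz : ZMod 3 → ZMod (3*s) := fun i => ((α' i.val : ℕ) : ZMod (3*s)) with hαz
    set h : ZMod (3*s) → ZMod (3*s) :=
      fun k => (r : ZMod (3*s)) * k + αz (ZMod.castHom ⟨s, rfl⟩ (ZMod 3) k) with hh
    have hcast : ∀ (K : ℕ), ZMod.castHom (⟨s, rfl⟩ : (3:ℕ) ∣ 3*s) (ZMod 3) (K : ZMod (3*s))
        = (K : ZMod 3) := by intro K; simp [map_natCast]
    have hval : ∀ k : ZMod (3*s), ((k.val : ℕ) : ZMod (3*s)) = k := by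
      intro k; simp [ZMod.natCast_val, ZMod.cast_id]
    -- h on natural casts
    have hhK : ∀ K : ℕ, h ((K : ZMod (3*s))) = ((r * K + α' (K % 3) : ℕ) : ZMod (3*s)) := by
      intro K
      rw [hh]
      simp only
      rw [hcast K, hαz]
      simp only
      rw [ZMod.val_natCast]
      push_cast
      ring
    -- g on powers of γ
    have hgK : ∀ K : ℕ, g (γ ^ K) = γ ^ (r * K + α' (K % 3)) := by
      intro K
      rw [heval K, ← hα' (K % 3) (Nat.mod_lt _ (by omega)), pow_add]
    -- Step 1 : bijectivity iff injectivity of h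
    have step1 : Function.Bijective g ↔ Function.Injective h := by
      constructor
      · intro hbij k k' hkk
        have e1 : h ((k.val : ℕ) : ZMod (3*s)) = h ((k'.val : ℕ) : ZMod (3*s)) := by
          rw [hval, hval]; exact hkk
        rw [hhK, hhK, ZMod.natCast_eq_natCast_iff, ← hpoweq] at e1
        rw [← hgK, ← hgK] at e1
        have e2 := hbij.injective e1
        rw [hpoweq, ← ZMod.natCast_eq_natCast_iff, hval, hval] at e2
        exact e2
      · intro hinj
        rw [Function.Bijective]
        have : Function.Injective g := by
          intro x y hxy
          have hg0 : g 0 = 0 := by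
            rw [hg]; simp only; rw [zero_pow (by omega : r ≠ 0), zero_mul]
          by_cases hx : x = 0 <;> by_cases hy : y = 0
          · rw [hx, hy]
          · exfalso
            obtain ⟨K, hK⟩ := hgen y hy
            rw [hx, hg0, ← hK, hgK] at hxy
            exact pow_ne_zero _ hγ0 hxy.symm
          · exfalso
            obtain ⟨K, hK⟩ := hgen x hx
            rw [hy, hg0, ← hK, hgK] at hxy
            exact pow_ne_zero _ hγ0 hxy
          · obtain ⟨K, hK⟩ := hgen x hx
            obtain ⟨K', hK'⟩ := hgen y hy
            rw [← hK, ← hK', hgK, hgK, hpoweq, ← ZMod.natCast_eq_natCast_iff] at hxy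
            rw [← hhK, ← hhK] at hxy
            have := hinj hxy
            rw [ZMod.natCast_eq_natCast_iff, ← hpoweq] at this
            rw [← hK, ← hK', this]
        exact ⟨this, Finite.surjective_of_injective this⟩
    -- Step 2 : aux_NT
    have step2 := aux_NT s r hs αz
    -- Step 3 : the ZMod 3 condition
    have hv12 : ((a1 : ZMod 3)) + ((a2 : ZMod 3)) = 0 := by
      have : γ ^ (a1 + a2) = 1 := by rw [pow_add, ha1, ha2, hA12]
      rw [hpowone] at this
      have h3 : (3:ℕ) ∣ a1 + a2 := dvd_trans ⟨s, rfl⟩ this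
      push_cast [← Nat.cast_add]
      rw [ZMod.natCast_eq_zero_iff]
      exact h3
    have step3 : Function.Injective
        (fun i : ZMod 3 => (r : ZMod 3) * i + ZMod.castHom ⟨s, rfl⟩ (ZMod 3) (αz i))
        ↔ ((a0 : ZMod 3) = 0 ∧ (r : ZMod 3) + 2 * (a2 : ZMod 3) ≠ 0) := by
      have hfun : (fun i : ZMod 3 => (r : ZMod 3) * i + ZMod.castHom ⟨s, rfl⟩ (ZMod 3) (αz i))
          = (fun i : ZMod 3 => (r : ZMod 3) * i +
            (if i.val = 0 then (a0 : ZMod 3) else if i.val = 1 then (a1 : ZMod 3)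
              else (a2 : ZMod 3))) := by
        funext i
        rw [hαz]
        simp only [map_natCast, hα'def]
        congr 1
        split_ifs <;> simp
      rw [hfun]
      exact aux_decide _ _ _ _ hv12
    -- condition translations
    have E2 : (A 0 ^ s = 1) ↔ (a0 : ZMod 3) = 0 := by
      rw [← ha0, ← pow_mul, hpowone, ZMod.natCast_eq_zero_iff]
      constructor
      · intro hdvd
        have := (Nat.mul_dvd_mul_iff_right hs).mp hdvd
        exact this
      · intro hdvd
        exact Nat.mul_dvd_mul hdvd dvd_rfl
    have E3 : (∀ b' : ℤ, γ ^ b' = A 0 → (3 : ℤ) ∣ b') ↔ (a0 : ZMod 3) = 0 := by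
      constructor
      · intro hall
        have := hall (a0 : ℤ) (by rw [zpow_natCast, ha0])
        rw [ZMod.natCast_eq_zero_iff]
        exact_mod_cast this
      · intro h0 b' hb'
        rw [ZMod.natCast_eq_zero_iff] at h0
        have hb'' : γ ^ b' = γ ^ ((a0:ℤ)) := by rw [zpow_natCast, ha0, hb']
        have := hzpow b' (a0:ℤ) hb''
        have h0' : (3:ℤ) ∣ (a0:ℤ) := by exact_mod_cast h0
        omega
    have E4 : (∀ b' : ℤ, γ ^ b' = A 2 ^ 2 → ¬ (3 : ℤ) ∣ ((r : ℤ) + b'))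
        ↔ ((r : ZMod 3) + 2 * (a2 : ZMod 3) ≠ 0) := by
      have hA22 : A 2 ^ 2 = γ ^ (2 * a2) := by rw [← ha2, ← pow_mul, mul_comm]
      have hcastiff : ((r : ZMod 3) + 2 * (a2 : ZMod 3) = 0) ↔ (3:ℤ) ∣ ((r:ℤ) + 2 * a2) := by
        have : (r : ZMod 3) + 2 * (a2 : ZMod 3) = ((r + 2*a2 : ℕ) : ZMod 3) := by push_cast; ring
        rw [this, ZMod.natCast_eq_zero_iff]
        constructor
        · intro hd; exact_mod_cast (Int.natCast_dvd_natCast.mpr hd)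
        · intro hd
          have : (3:ℤ) ∣ ((r + 2*a2 : ℕ) : ℤ) := by push_cast; exact_mod_cast hd
          exact_mod_cast this
      constructor
      · intro hall h0
        have := hall ((2*a2 : ℕ) : ℤ) (by rw [zpow_natCast, hA22])
        apply this
        rw [hcastiff] at h0
        push_cast at h0 ⊢
        exact h0
      · intro hne b' hb'
        intro hdvd
        apply hne
        rw [hcastiff]
        have hb'' : γ ^ b' = γ ^ (((2*a2 : ℕ)):ℤ) := by rw [zpow_natCast, ← hA22]; exact hb'
        have := hzpow b' ((2*a2 : ℕ):ℤ) hb''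
        push_cast at this
        omega
    constructor
    · intro hbij
      have := step2.mp (step1.mp hbij)
      obtain ⟨hgcd, hinj3⟩ := this
      rw [step3] at hinj3
      exact ⟨hgcd, hA0, E2.mpr hinj3.1, E3.mpr hinj3.1, E4.mpr hinj3.2⟩
    · rintro ⟨h1, _, _, h4, h5⟩
      exact step1.mpr (step2.mpr ⟨h1, step3.mpr ⟨E3.mp h4, E4.mp h5⟩⟩)
  · -- some A i = 0 : both sides false
    constructor
    · intro hbij
      exfalso
      push_neg at hA0
      obtain ⟨i, hi2, hAi⟩ := hA0
      have hgi : g (γ ^ i) = 0 := by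
        rw [heval i, Nat.mod_eq_of_lt (by omega), hAi, mul_zero]
      have hg0 : g 0 = 0 := by
        rw [hg]; simp only; rw [zero_pow (by omega : r ≠ 0), zero_mul]
      have := hbij.injective (hgi.trans hg0.symm)
      exact pow_ne_zero i hγ0 this
    · rintro ⟨_, h2, _⟩
      exact absurd h2 hA0
end

section
/- Let p be an odd prime, q = p^m, and suppose q − 1 = l·s where l ≥ 3 is odd, s is a positive integer, e is a positive integer with gcd(l, e) = 1, and r is a positive integer with r < q − 1. If P(x) = x^r (x^{es} + 1) is a permutation polynomial over 𝔽_q, then gcd(r, s) = 1, p divides 2^s − 1, and l does not divide 2r + es. -/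
open Finset Polynomial

lemma aux_prod_gen {G M : Type*} [Group G] [Fintype G] [CommMonoid M]
    (g : G) (hg : ∀ x, x ∈ Subgroup.zpowers g) (f : G → M) :
    ∏ x, f x = ∏ i ∈ Finset.range (Fintype.card G), f (g ^ i) := by
  have hord : orderOf g = Fintype.card G := by
    simpa [Nat.card_eq_fintype_card] using orderOf_eq_card_of_forall_mem_zpowers hg
  symm
  refine Finset.prod_nbij (fun i => g ^ i) (fun i _ => Finset.mem_univ _) ?_ ?_ (fun i _ => rfl)
  · intro i hi j hj hij
    rw [Finset.coe_range, Set.mem_Iio] at hi hj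
    exact pow_injOn_Iio_orderOf (by simpa [hord]) (by simpa [hord]) hij
  · intro x _
    have : x ∈ Submonoid.powers g := mem_powers_iff_mem_zpowers.2 (hg x)
    obtain ⟨k, rfl⟩ := this
    refine ⟨k % orderOf g, ?_, ?_⟩
    · simp only [Finset.coe_range, Set.mem_Iio]
      rw [← hord]; exact Nat.mod_lt _ (hord ▸ Fintype.card_pos)
    · exact pow_mod_orderOf g k

lemma aux_prod_split {F : Type*} [CommRing F] (b : F) (l s : ℕ) (hb : b ^ l = 1) :
    ∏ i ∈ Finset.range (l * s), (b ^ i + 1) = (∏ i ∈ Finset.range l, (b ^ i + 1)) ^ s := by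
  induction s with
  | zero => simp
  | succ k ih =>
    rw [Nat.mul_succ, Finset.prod_range_add, ih, pow_succ]
    congr 1
    refine Finset.prod_congr rfl fun i _ => ?_
    rw [pow_add, pow_mul, hb, one_pow, one_mul]

lemma aux_prod_two {F : Type*} [CommRing F] [IsDomain F] {b : F} {l : ℕ}
    (hl : 0 < l) (hlodd : Odd l) (hb : IsPrimitiveRoot b l) :
    ∏ i ∈ Finset.range l, (b ^ i + 1) = 2 := by
  classical
  have himg : (Finset.range l).image (b ^ ·) = nthRootsFinset l (1 : F) := by
    apply Finset.eq_of_subset_of_card_le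
    · intro x hx
      obtain ⟨i, _, rfl⟩ := Finset.mem_image.1 hx
      rw [Polynomial.mem_nthRootsFinset hl, ← pow_mul, mul_comm, pow_mul, hb.pow_eq_one, one_pow]
    · rw [hb.card_nthRootsFinset, Finset.card_image_of_injOn hb.injOn_pow, Finset.card_range]
  have key := congrArg (Polynomial.eval (-1 : F)) (Polynomial.X_pow_sub_one_eq_prod hl hb)
  rw [Polynomial.eval_sub, Polynomial.eval_pow, Polynomial.eval_X, Polynomial.eval_one,
    Polynomial.eval_prod, hlodd.neg_one_pow] at key
  simp only [Polynomial.eval_sub, Polynomial.eval_X, Polynomial.eval_C] at key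
  have key2 : ∏ x ∈ nthRootsFinset l (1 : F), (-1 - x) = - ∏ x ∈ nthRootsFinset l (1 : F), (1 + x) := by
    calc ∏ x ∈ nthRootsFinset l (1 : F), (-1 - x)
        = ∏ x ∈ nthRootsFinset l (1 : F), ((-1) * (1 + x)) :=
          Finset.prod_congr rfl (fun x _ => by ring)
      _ = (∏ _x ∈ nthRootsFinset l (1 : F), (-1 : F)) * ∏ x ∈ nthRootsFinset l (1 : F), (1 + x) :=
          Finset.prod_mul_distrib
      _ = - ∏ x ∈ nthRootsFinset l (1 : F), (1 + x) := by
          rw [Finset.prod_const, hb.card_nthRootsFinset, hlodd.neg_one_pow, neg_one_mul]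
  rw [key2] at key
  have h2 : ∏ x ∈ nthRootsFinset l (1 : F), (1 + x) = 2 := by
    have : -(2:F) = - ∏ x ∈ nthRootsFinset l (1 : F), (1 + x) := by rw [← key]; ring
    exact (neg_injective this).symm
  rw [← himg, Finset.prod_image
    (fun i hi j hj hij => hb.injOn_pow (by simpa using hi) (by simpa using hj) hij)] at h2
  rw [← h2]
  exact Finset.prod_congr rfl fun i _ => by ring


/-- Let `p` be an odd prime, `q = p^m`, `q - 1 = l·s` with `l ≥ 3`
odd, `gcd(l, e) = 1`, and `0 < r < q - 1`. If `P(x) = x^r (x^{es} + 1)` is a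
permutation polynomial over `𝔽_q`, then `gcd(r,s) = 1`, `p ∣ 2^s - 1`, and
`l ∤ 2r + es`. -/
theorem stmt_10 (p m q : ℕ) (hp : p.Prime) (hodd : Odd p) (hm : 0 < m)
    (hq : q = p ^ m)
    (F : Type*) [Field F] [Fintype F] (hF : Fintype.card F = q)
    (l s e r : ℕ) (hl3 : 3 ≤ l) (hlodd : Odd l) (hs : 0 < s)
    (hls : q - 1 = l * s) (he : 0 < e) (hle : Nat.gcd l e = 1)
    (hr : 0 < r) (hr' : r < q - 1)
    (hPP : Function.Bijective (fun x : F => x ^ r * (x ^ (e * s) + 1))) :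
    Nat.gcd r s = 1 ∧ p ∣ 2 ^ s - 1 ∧ ¬ l ∣ 2 * r + e * s := by
  classical
  have hls0 : 0 < l * s := Nat.mul_pos (by omega) hs
  have hcard : Fintype.card Fˣ = l * s := by
    rw [Fintype.card_units, hF, hls]
  obtain ⟨ω, hω⟩ := IsCyclic.exists_generator (α := Fˣ)
  have hordw : orderOf ω = l * s := by
    simpa [Nat.card_eq_fintype_card, hcard] using orderOf_eq_card_of_forall_mem_zpowers hω
  have hw1 : ω ^ (l * s) = 1 := hordw ▸ pow_orderOf_eq_one ω
  -- Claim 1 : gcd r s = 1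
  have hgcd : Nat.gcd r s = 1 := by
    set d := Nat.gcd r s with hd
    have hd0 : 0 < d := Nat.gcd_pos_of_pos_left _ hr
    obtain ⟨r', hrr⟩ := Nat.gcd_dvd_left r s
    obtain ⟨s', hss⟩ := Nat.gcd_dvd_right r s
    set ζ : Fˣ := ω ^ ((l * s') : ℕ) with hzdef
    have hzr : ζ ^ r = 1 := by
      rw [← pow_mul]
      have : l * s' * r = l * s * r' := by
        have : s' * r = s * r' := by
          have h1 : d * (s' * r) = d * (s * r') := by
            calc d * (s' * r) = (d * s') * r := by ring
              _ = s * r := by rw [← hss]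
              _ = s * (d * r') := by rw [← hrr]
              _ = d * (s * r') := by ring
          exact Nat.eq_of_mul_eq_mul_left hd0 h1
        calc l * s' * r = l * (s' * r) := by ring
          _ = l * (s * r') := by rw [this]
          _ = l * s * r' := by ring
      rw [this, pow_mul, hw1, one_pow]
    have hzs : ζ ^ s = 1 := by
      rw [← pow_mul]
      have : l * s' * s = l * s * s' := by ring
      rw [this, pow_mul, hw1, one_pow]
    have hzes : (ζ : F) ^ (e * s) = 1 := by
      rw [mul_comm, pow_mul, ← Units.val_pow_eq_pow_val, hzs, Units.val_one, one_pow]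
    have hPz : ((ζ : F)) ^ r * ((ζ : F) ^ (e * s) + 1) = (1 : F) ^ r * ((1 : F) ^ (e * s) + 1) := by
      rw [hzes, ← Units.val_pow_eq_pow_val, hzr, Units.val_one, one_pow, one_pow]
    have hz1 : (ζ : F) = 1 := hPP.injective hPz
    have hzu : ζ = 1 := Units.ext (by simpa using hz1)
    -- from ζ = 1 : orderOf ω ∣ l * s'
    have hdvd : l * s ∣ l * s' := by
      rw [← hordw]
      exact orderOf_dvd_of_pow_eq_one hzu
    have hle' : l * s ≤ l * s' ∨ s' = 0 := by
      rcases Nat.eq_zero_or_pos (l * s') with h | h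
      · right; rcases Nat.mul_eq_zero.mp h with h' | h' <;> omega
      · left; exact Nat.le_of_dvd h hdvd
    have hs'pos : 0 < s' := by
      rcases Nat.eq_zero_or_pos s' with h | h
      · exfalso; rw [h, Nat.mul_zero] at hss; omega
      · exact h
    have : s ≤ s' := by
      rcases hle' with h | h
      · exact Nat.le_of_mul_le_mul_left h (by omega)
      · omega
    -- s = d * s' and s ≤ s' forces d = 1
    nlinarith [hss, hd0, hs'pos, hs]
  -- parity facts
  have hqodd : Odd q := by rw [hq]; exact hodd.pow
  have hseven : Even s := by
    have h2 : Even (l * s) := by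
      have h3 : Even (q - 1) := Nat.Odd.sub_odd hqodd odd_one
      rwa [hls] at h3
    rcases Nat.even_mul.mp h2 with h | h
    · exact absurd h (Nat.not_even_iff_odd.mpr hlodd)
    · exact h
  have hrodd : Odd r := by
    rcases Nat.even_or_odd r with h | h
    · exfalso
      have : 2 ∣ Nat.gcd r s := Nat.dvd_gcd h.two_dvd hseven.two_dvd
      rw [hgcd] at this; omega
    · exact h
  -- characteristic
  haveI : CharP F (ringChar F) := ringChar.charP F
  have hrp : ringChar F = p := by
    have hprime := CharP.char_is_prime F (ringChar F)
    have hdvd : ringChar F ∣ q := by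
      rw [← hF]
      exact (CharP.cast_eq_zero_iff F (ringChar F) _).mp (FiniteField.cast_card_eq_zero F)
    rw [hq] at hdvd
    exact (Nat.prime_dvd_prime_iff_eq hprime hp).mp (hprime.dvd_of_dvd_pow hdvd)
  haveI hcharp : CharP F p := hrp ▸ ringChar.charP F
  -- the map restricted to units
  have hP0 : (0 : F) ^ r * ((0 : F) ^ (e * s) + 1) = 0 := by
    rw [zero_pow hr.ne', zero_mul]
  have hne : ∀ x : F, x ≠ 0 → x ^ r * (x ^ (e * s) + 1) ≠ 0 := by
    intro x hx h
    exact hx (hPP.injective (show x ^ r * (x ^ (e*s) + 1)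
      = (0:F) ^ r * ((0:F) ^ (e*s) + 1) by rw [h, hP0]))
  set φ : Fˣ → Fˣ := fun x => Units.mk0 _ (hne x x.ne_zero) with hφ
  have hφbij : Function.Bijective φ := by
    constructor
    · intro a b h
      have : ((a:F)) ^ r * ((a:F) ^ (e*s) + 1) = ((b:F)) ^ r * ((b:F) ^ (e*s) + 1) := by
        have := congrArg Units.val h
        simpa [hφ] using this
      exact Units.ext (hPP.injective this)
    · intro y
      obtain ⟨x, hx⟩ := hPP.surjective (y : F)
      simp only at hx
      have hx0 : x ≠ 0 := by
        intro h0
        rw [h0, hP0] at hx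
        exact y.ne_zero hx.symm
      exact ⟨Units.mk0 x hx0, Units.ext (by simpa [hφ] using hx)⟩
  -- product identity over the units
  have hprodid : ∏ x : Fˣ, (x : F) = -1 := by
    have h3 := map_prod (Units.coeHom F) (fun x : Fˣ => x) Finset.univ
    simp only [Units.coeHom_apply] at h3
    rw [← h3, FiniteField.prod_univ_units_id_eq_neg_one]
    simp
  have hprodP : ∏ x : Fˣ, ((x:F) ^ r * ((x:F) ^ (e*s) + 1)) = -1 := by
    rw [Fintype.prod_bijective φ hφbij _ (fun y : Fˣ => (y : F)) (fun x => by simp [hφ])]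
    exact hprodid
  have hQ : ∏ x : Fˣ, ((x:F) ^ (e*s) + 1) = 1 := by
    have hsplit : (∏ x : Fˣ, ((x:F)) ^ r) * ∏ x : Fˣ, ((x:F) ^ (e*s) + 1) = -1 := by
      rw [← Finset.prod_mul_distrib]; exact hprodP
    rw [Finset.prod_pow, hprodid, hrodd.neg_one_pow] at hsplit
    have := congrArg (fun z => (-1 : F) * z) hsplit
    simpa using this
  -- compute the product as 2^s
  set β : F := (ω : F) ^ (e * s) with hβ
  have hβl : β ^ l = 1 := by
    rw [hβ, ← pow_mul]
    have : e * s * l = l * s * e := by ring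
    rw [this, pow_mul, ← Units.val_pow_eq_pow_val, hw1, Units.val_one, one_pow]
  have hβord : orderOf β = l := by
    have h1 : β = ((ω ^ (e * s) : Fˣ) : F) := by rw [hβ, Units.val_pow_eq_pow_val]
    rw [h1, orderOf_units, orderOf_pow, hordw]
    have hg : Nat.gcd (l * s) (e * s) = s := by
      rw [Nat.gcd_mul_right, hle, one_mul]
    rw [hg, Nat.mul_div_cancel _ hs]
  have hβprim : IsPrimitiveRoot β l := hβord ▸ IsPrimitiveRoot.orderOf β
  have h2s : (2 : F) ^ s = 1 := by
    have hcalc : ∏ x : Fˣ, ((x:F) ^ (e*s) + 1) = 2 ^ s := by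
      rw [aux_prod_gen ω hω (fun x : Fˣ => ((x:F) ^ (e*s) + 1)), hcard]
      have hterm : ∀ i, ((ω ^ i : Fˣ) : F) ^ (e * s) + 1 = β ^ i + 1 := by
        intro i
        rw [Units.val_pow_eq_pow_val, ← pow_mul, mul_comm i (e*s), pow_mul, hβ]
      rw [Finset.prod_congr rfl (fun i _ => hterm i),
        aux_prod_split β l s hβl, aux_prod_two (by omega) hlodd hβprim]
    rw [← hcalc, hQ]
  have hdvd2 : p ∣ 2 ^ s - 1 := by
    have h1 : (1:ℕ) ≤ 2 ^ s := Nat.one_le_two_pow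
    have hc : ((2 ^ s - 1 : ℕ) : F) = 0 := by
      push_cast [h1]
      rw [h2s]; ring
    exact (CharP.cast_eq_zero_iff F p _).mp hc
  refine ⟨hgcd, hdvd2, ?_⟩
  -- Claim 3
  intro hdl
  set ζ : Fˣ := ω ^ s with hζ
  have hzl : ζ ^ l = 1 := by
    rw [hζ, ← pow_mul, mul_comm s l, hw1]
  have hordz : orderOf ζ = l := by
    rw [hζ, orderOf_pow, hordw]
    have hg : Nat.gcd (l * s) s = s := Nat.gcd_eq_right ⟨l, mul_comm l s⟩
    rw [hg, Nat.mul_div_cancel _ hs]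
  have hzk : (ζ : F) ^ (2 * r + e * s) = 1 := by
    obtain ⟨c, hc⟩ := hdl
    rw [hc, pow_mul, ← Units.val_pow_eq_pow_val, hzl, Units.val_one, one_pow]
  have hzne : (ζ : F) ≠ 0 := ζ.ne_zero
  have hPeq : ((ζ:F)⁻¹) ^ r * (((ζ:F)⁻¹) ^ (e*s) + 1) = (ζ:F) ^ r * ((ζ:F) ^ (e*s) + 1) := by
    have h1 : (ζ:F) ^ r ≠ 0 := pow_ne_zero _ hzne
    have h2 : (ζ:F) ^ (e*s) ≠ 0 := pow_ne_zero _ hzne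
    have hexp : (ζ:F) ^ (2 * r + e * s) = (ζ:F) ^ r * (ζ:F) ^ r * (ζ:F) ^ (e*s) := by
      rw [two_mul, pow_add, pow_add]
    rw [hexp] at hzk
    rw [inv_pow, inv_pow]
    field_simp
    linear_combination (-1 - (ζ:F) ^ (e*s)) * hzk
  have hzz : ((ζ:F))⁻¹ = (ζ:F) := hPP.injective hPeq
  have hz2 : ζ ^ 2 = 1 := by
    apply Units.ext
    rw [Units.val_pow_eq_pow_val, Units.val_one, pow_two]
    nth_rewrite 2 [← hzz]
    exact mul_inv_cancel₀ hzne
  have : l ∣ 2 := hordz ▸ orderOf_dvd_of_pow_eq_one hz2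
  have := Nat.le_of_dvd (by omega) this
  omega
end

section
/- Let p be an odd prime, q = p^m, and suppose q − 1 = l·s where l ≥ 3 is odd and s is even. Let e, r be positive integers with gcd(l, e) = 1, r < q − 1, and l dividing r + es. Let γ be a primitive element of 𝔽_q, ξ = γ^s, and A_i = ξ^{ei} + 1 for 0 ≤ i ≤ l − 1. Then P(x) = x^r (x^{es} + 1) is a permutation polynomial over 𝔽_q if and only if: gcd(r, s) = 1, p divides 2^s − 1, l does not divide r, the elements A_1^s, A_2^s, …, A_{l−1}^s are pairwise distinct, and for every k = 1, …, l − 1 and all integers b, b' with γ^b = A_k and γ^{b'} = 2, one has b + kr ≢ b' (mod l). -/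
private lemma arith_aux (l s r : ℕ) (hl : 0 < l) (hs : 0 < s) (c : ℕ → ℕ) :
    (∀ t t' : ℕ, t < l * s → t' < l * s →
        t * r + c (t % l) ≡ t' * r + c (t' % l) [MOD l * s] → t = t') ↔
      (Nat.gcd r s = 1 ∧ ∀ i j : ℕ, i < l → j < l →
        i * r + c i ≡ j * r + c j [MOD l] → i = j) := by
  constructor
  · intro T
    have hg : Nat.gcd r s = 1 := by
      by_contra hd
      have hds : Nat.gcd r s ∣ s := Nat.gcd_dvd_right r s
      have hdr : Nat.gcd r s ∣ r := Nat.gcd_dvd_left r s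
      have hd0 : 0 < Nat.gcd r s := Nat.gcd_pos_of_pos_right r hs
      have hd2 : 2 ≤ Nat.gcd r s := by omega
      have h1 : s / Nat.gcd r s < s := Nat.div_lt_self hs hd2
      have h2 : 0 < s / Nat.gcd r s := Nat.div_pos (Nat.le_of_dvd hs hds) hd0
      have hmod : 0 * r + c (0 % l) ≡ (l * (s / Nat.gcd r s)) * r +
          c ((l * (s / Nat.gcd r s)) % l) [MOD l * s] := by
        rw [Nat.mul_mod_right, Nat.zero_mod, zero_mul, zero_add]
        have hdvd : l * s ∣ (l * (s / Nat.gcd r s)) * r := by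
          refine ⟨r / Nat.gcd r s, ?_⟩
          have h3 : s / Nat.gcd r s * Nat.gcd r s = s := Nat.div_mul_cancel hds
          have h4 : Nat.gcd r s * (r / Nat.gcd r s) = r := Nat.mul_div_cancel' hdr
          calc l * (s / Nat.gcd r s) * r
              = l * (s / Nat.gcd r s) * (Nat.gcd r s * (r / Nat.gcd r s)) := by rw [h4]
            _ = l * (s / Nat.gcd r s * Nat.gcd r s) * (r / Nat.gcd r s) := by ring
            _ = l * s * (r / Nat.gcd r s) := by rw [h3]
        calc c 0 = 0 + c 0 := by omega
          _ ≡ (l * (s / Nat.gcd r s)) * r + c 0 [MOD l * s] :=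
            Nat.ModEq.add_right _ ((Nat.modEq_zero_iff_dvd).mpr hdvd).symm
      have hlt : l * (s / Nat.gcd r s) < l * s := by
        have hmul : l * (s / Nat.gcd r s + 1) ≤ l * s := Nat.mul_le_mul_left l (by omega)
        have hdist : l * (s / Nat.gcd r s + 1) = l * (s / Nat.gcd r s) + l := by ring
        omega
      have hTz := T 0 (l * (s / Nat.gcd r s)) (by positivity) hlt hmod
      have hpos : 0 < l * (s / Nat.gcd r s) := by positivity
      omega
    refine ⟨hg, ?_⟩
    intro i j hi hj hmod
    obtain ⟨d, hdeq⟩ := (Nat.modEq_iff_dvd.mp hmod)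
    haveI : NeZero s := ⟨hs.ne'⟩
    have hcop : Nat.Coprime r s := hg
    obtain ⟨u', hu's, hdvds⟩ : ∃ u' : ℕ, u' < s ∧ (s : ℤ) ∣ (d - u' * r) := by
      refine ⟨((d : ZMod s) * ((ZMod.unitOfCoprime r hcop)⁻¹ : (ZMod s)ˣ)).val,
        ZMod.val_lt _, ?_⟩
      have h0 : ((d - (((d : ZMod s) * ((ZMod.unitOfCoprime r hcop)⁻¹ : (ZMod s)ˣ)).val
          : ℕ) * r : ℤ) : ZMod s) = 0 := by
        push_cast
        rw [ZMod.natCast_val, ZMod.cast_id, sub_eq_zero, mul_assoc]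
        have hco : ((r : ZMod s)) = ((ZMod.unitOfCoprime r hcop : (ZMod s)ˣ) : ZMod s) :=
          (ZMod.coe_unitOfCoprime r hcop).symm
        rw [hco, ← Units.val_mul, inv_mul_cancel, Units.val_one, mul_one]
      exact_mod_cast (ZMod.intCast_zmod_eq_zero_iff_dvd _ s).mp h0
    have htl : i + l * u' < l * s := by
      have hmul : l * (u' + 1) ≤ l * s := Nat.mul_le_mul_left l (by omega)
      have hdist : l * (u' + 1) = l * u' + l := by ring
      omega
    have htmod : (i + l * u') % l = i := by
      rw [Nat.add_mul_mod_self_left, Nat.mod_eq_of_lt hi]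
    have hdeq' : (j : ℤ) * r + c j - ((i : ℤ) * r + c i) = l * d := by
      push_cast at hdeq; linarith
    have hmod2 : (i + l * u') * r + c ((i + l * u') % l) ≡ j * r + c (j % l) [MOD l * s] := by
      rw [htmod, Nat.mod_eq_of_lt hj, Nat.modEq_iff_dvd]
      have hE : ((j * r + c j : ℕ) : ℤ) - (((i + l * u') * r + c i : ℕ) : ℤ)
          = (l : ℤ) * (d - (u' : ℤ) * r) := by
        push_cast
        linear_combination hdeq'
      rw [hE]
      have hc : ((l * s : ℕ) : ℤ) = (l : ℤ) * s := by push_cast; ring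
      rw [hc]
      exact mul_dvd_mul_left _ hdvds
    have hTz := T (i + l * u') j htl
      (by have h1 : l * 1 ≤ l * s := Nat.mul_le_mul_left l hs; omega) hmod2
    rcases Nat.eq_zero_or_pos u' with h0 | h0
    · rw [h0, Nat.mul_zero] at hTz; omega
    · have h1 : l * 1 ≤ l * u' := Nat.mul_le_mul_left l h0
      omega
  · rintro ⟨hg, hW⟩ t t' ht ht' hmod
    have hmodl : t * r + c (t % l) ≡ t' * r + c (t' % l) [MOD l] :=
      hmod.of_dvd (Dvd.intro s rfl)
    have hti : t % l ≡ t [MOD l] := Nat.mod_modEq t l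
    have hti' : t' % l ≡ t' [MOD l] := Nat.mod_modEq t' l
    have hstep : (t % l) * r + c (t % l) ≡ (t' % l) * r + c (t' % l) [MOD l] :=
      ((hti.mul_right r).add_right _).trans (hmodl.trans (((hti'.mul_right r).add_right _).symm))
    have hij : t % l = t' % l :=
      hW _ _ (Nat.mod_lt _ hl) (Nat.mod_lt _ hl) hstep
    have hceq : c (t % l) = c (t' % l) := by rw [hij]
    have htr : t * r ≡ t' * r [MOD l * s] := by
      have := hmod
      rw [hceq] at this
      exact Nat.ModEq.add_right_cancel' _ this
    obtain ⟨D, hD⟩ := Nat.modEq_iff_dvd.mp htr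
    -- (l*s : ℤ) ∣ (t' - t) * r ; also l ∣ t' - t
    have hltt : (l : ℤ) ∣ ((t' : ℤ) - t) := by
      have : (t : ℕ) ≡ t' [MOD l] := hti.symm.trans ((Nat.ModEq.refl _).trans (by rw [hij]; exact hti'))
      exact Nat.modEq_iff_dvd.mp this
    obtain ⟨k, hk⟩ := hltt
    have hsdvd : (s : ℤ) ∣ k * r := by
      have h1 : ((l : ℤ) * s) ∣ (l * (k * r)) := by
        refine ⟨D, ?_⟩
        have : ((t' : ℤ) * r - t * r) = (l * s) * D := by push_cast at hD ⊢; linarith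
        calc (l : ℤ) * (k * r) = ((t' : ℤ) - t) * r := by rw [hk]; ring
          _ = (t' : ℤ) * r - t * r := by ring
          _ = (l * s) * D := this
      have hl0 : (l : ℤ) ≠ 0 := by exact_mod_cast hl.ne'
      obtain ⟨D', hD'⟩ := h1
      refine ⟨D', ?_⟩
      have : (l : ℤ) * (k * r) = l * (s * D') := by rw [hD']; ring
      exact mul_left_cancel₀ hl0 this
    have hsk : (s : ℤ) ∣ k := by
      have hco : IsCoprime (s : ℤ) (r : ℤ) := by
        rw [Int.isCoprime_iff_gcd_eq_one, Int.gcd_natCast_natCast, Nat.gcd_comm]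
        exact hg
      exact hco.dvd_of_dvd_mul_right hsdvd
    have : ((l : ℤ) * s) ∣ ((t' : ℤ) - t) := by
      obtain ⟨k', hk'⟩ := hsk
      exact ⟨k', by rw [hk, hk']; ring⟩
    have hc : ((l * s : ℕ) : ℤ) = (l : ℤ) * s := by push_cast; ring
    have habs : |(t' : ℤ) - (t : ℤ)| < (l : ℤ) * s := by
      rw [abs_sub_lt_iff]
      have h1 : (t : ℤ) < (l : ℤ) * s := by rw [← hc]; exact_mod_cast ht
      have h2 : (t' : ℤ) < (l : ℤ) * s := by rw [← hc]; exact_mod_cast ht'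
      constructor <;> omega
    have hz : (t' : ℤ) - (t : ℤ) = 0 := Int.eq_zero_of_abs_lt_dvd this habs
    omega

private lemma prod_aux {F : Type*} [Field F] {l : ℕ} (hl : 0 < l) (hlodd : Odd l)
    {ζ : F} (hζ : IsPrimitiveRoot ζ l) :
    ∏ i ∈ Finset.range l, (ζ ^ i + 1) = 2 := by
  classical
  haveI : NeZero l := ⟨hl.ne'⟩
  have him : Polynomial.nthRootsFinset l (1 : F) = (Finset.range l).image (ζ ^ ·) := by
    ext x
    rw [Polynomial.mem_nthRootsFinset hl]
    constructor
    · intro hx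
      obtain ⟨i, hi, hix⟩ := hζ.eq_pow_of_pow_eq_one hx
      exact Finset.mem_image.mpr ⟨i, Finset.mem_range.mpr hi, hix⟩
    · intro hx
      obtain ⟨i, _, rfl⟩ := Finset.mem_image.mp hx
      rw [← pow_mul, mul_comm, pow_mul, hζ.pow_eq_one, one_pow]
  have hpoly := Polynomial.X_pow_sub_one_eq_prod hl hζ
  have heval := congrArg (Polynomial.eval (-1 : F)) hpoly
  rw [Polynomial.eval_sub, Polynomial.eval_pow, Polynomial.eval_X, Polynomial.eval_one,
    Polynomial.eval_prod] at heval
  simp only [Polynomial.eval_sub, Polynomial.eval_X, Polynomial.eval_C] at heval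
  rw [hlodd.neg_one_pow] at heval
  have h2 : ∏ z ∈ Polynomial.nthRootsFinset l (1 : F), ((-1 : F) - z)
      = (-1) ^ (Polynomial.nthRootsFinset l (1 : F)).card *
        ∏ z ∈ Polynomial.nthRootsFinset l (1 : F), (z + 1) := by
    rw [← Finset.prod_const, ← Finset.prod_mul_distrib]
    exact Finset.prod_congr rfl fun z _ => by ring
  rw [h2, hζ.card_nthRootsFinset, hlodd.neg_one_pow] at heval
  have hprod : ∏ z ∈ Polynomial.nthRootsFinset l (1 : F), (z + 1) = 2 := by
    linear_combination heval
  rw [him] at hprod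
  rw [Finset.prod_image (fun i hi j hj h =>
    hζ.pow_inj (Finset.mem_range.mp hi) (Finset.mem_range.mp hj) h)] at hprod
  exact hprod

theorem stmt_14 (p m q : ℕ) (hp : p.Prime) (hodd : Odd p) (hm : 0 < m)
    (hq : q = p ^ m)
    (F : Type*) [Field F] [Fintype F] (hF : Fintype.card F = q)
    (l s e r : ℕ) (hl3 : 3 ≤ l) (hlodd : Odd l) (hseven : Even s) (hs : 0 < s)
    (hls : q - 1 = l * s) (he : 0 < e) (hle : Nat.gcd l e = 1)
    (hr : 0 < r) (hr' : r < q - 1) (hlres : l ∣ r + e * s)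
    (γ : F) (hγ : orderOf γ = q - 1)
    (ξ : F) (hξ : ξ = γ ^ s)
    (A : ℕ → F) (hA : ∀ i, A i = ξ ^ (e * i) + 1) :
    Function.Bijective (fun x : F => x ^ r * (x ^ (e * s) + 1)) ↔
      (Nat.gcd r s = 1 ∧
       p ∣ 2 ^ s - 1 ∧
       ¬ l ∣ r ∧
       (∀ i j : ℕ, 1 ≤ i → i ≤ l - 1 → 1 ≤ j → j ≤ l - 1 → i ≠ j →
          A i ^ s ≠ A j ^ s) ∧
       (∀ k : ℕ, 1 ≤ k → k ≤ l - 1 → ∀ b b' : ℤ,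
          γ ^ b = A k → γ ^ b' = (2 : F) →
            ¬ (b + (k : ℤ) * (r : ℤ) ≡ b' [ZMOD (l : ℤ)]))) := by
  classical
  have hq1 : 1 < q := by
    rw [hq]
    calc 1 < p := hp.one_lt
      _ ≤ p ^ m := Nat.le_self_pow hm.ne' p
  have hl0 : 0 < l := by omega
  have hN0 : 0 < l * s := by positivity
  have hγN : orderOf γ = l * s := by rw [hγ, hls]
  have hγ1 : γ ^ (l * s) = 1 := by rw [← hγN]; exact pow_orderOf_eq_one γ
  have hγ0 : γ ≠ 0 := by
    intro h
    rw [h, zero_pow hN0.ne'] at hγ1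
    exact zero_ne_one hγ1
  have hu : IsUnit γ := isUnit_iff_ne_zero.mpr hγ0
  have huv : (hu.unit : F) = γ := hu.unit_spec
  have hou : orderOf hu.unit = l * s := by
    rw [← orderOf_units, huv, hγN]
  haveI hcp : CharP F p := by
    obtain ⟨c, hc⟩ := CharP.exists F
    haveI := hc
    have hcprime : c.Prime := CharP.char_is_prime F c
    have hq0 : ((q : ℕ) : F) = 0 := by rw [← hF]; exact FiniteField.cast_card_eq_zero F
    have hcq : c ∣ q := (CharP.cast_eq_zero_iff F c q).mp hq0
    rw [hq] at hcq
    have hcp' : c ∣ p := hcprime.dvd_of_dvd_pow hcq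
    have : c = p := (Nat.prime_dvd_prime_iff_eq hcprime hp).mp hcp'
    rwa [this] at hc
  have h2F : (2 : F) ≠ 0 := by
    intro h
    have h2 : ((2 : ℕ) : F) = 0 := by exact_mod_cast h
    have hd := (CharP.cast_eq_zero_iff F p 2).mp h2
    have hp2 : p = 2 := (Nat.prime_dvd_prime_iff_eq hp Nat.prime_two).mp hd
    rcases hodd with ⟨k, hk⟩
    omega
  have bridge1 : ∀ a c : ℕ, γ ^ a = γ ^ c ↔ a ≡ c [MOD l * s] := by
    intro a c
    constructor
    · intro hab
      have h1 : hu.unit ^ a = hu.unit ^ c := Units.ext (by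
        rw [Units.val_pow_eq_pow_val, Units.val_pow_eq_pow_val, huv]; exact hab)
      have h2 := pow_eq_pow_iff_modEq.mp h1
      rwa [hou] at h2
    · intro hab
      have h1 : hu.unit ^ a = hu.unit ^ c := pow_eq_pow_iff_modEq.mpr (by rwa [hou])
      calc γ ^ a = ((hu.unit ^ a : Fˣ) : F) := by rw [Units.val_pow_eq_pow_val, huv]
        _ = ((hu.unit ^ c : Fˣ) : F) := by rw [h1]
        _ = γ ^ c := by rw [Units.val_pow_eq_pow_val, huv]
  have bridge2 : ∀ a c : ℤ, γ ^ a = γ ^ c ↔ a ≡ c [ZMOD ((l * s : ℕ) : ℤ)] := by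
    intro a c
    constructor
    · intro hab
      have h1 : hu.unit ^ a = hu.unit ^ c := Units.ext (by
        rw [Units.val_zpow_eq_zpow_val, Units.val_zpow_eq_zpow_val, huv]; exact hab)
      have h2 := zpow_eq_zpow_iff_modEq.mp h1
      rwa [hou] at h2
    · intro hab
      have h1 : hu.unit ^ a = hu.unit ^ c := zpow_eq_zpow_iff_modEq.mpr (by rwa [hou])
      calc γ ^ a = ((hu.unit ^ a : Fˣ) : F) := by rw [Units.val_zpow_eq_zpow_val, huv]
        _ = ((hu.unit ^ c : Fˣ) : F) := by rw [h1]
        _ = γ ^ c := by rw [Units.val_zpow_eq_zpow_val, huv]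
  have hsurj : ∀ x : F, x ≠ 0 → ∃ t : ℕ, t < l * s ∧ γ ^ t = x := by
    intro x hx
    have hxu : IsUnit x := isUnit_iff_ne_zero.mpr hx
    have htop : Subgroup.zpowers hu.unit = ⊤ := by
      apply Subgroup.eq_top_of_card_eq
      rw [Nat.card_zpowers, hou, Nat.card_units, Nat.card_eq_fintype_card, hF, hls]
    have hmem : hxu.unit ∈ Subgroup.zpowers hu.unit := htop ▸ Subgroup.mem_top _
    rw [← mem_powers_iff_mem_zpowers] at hmem
    obtain ⟨k, hk⟩ := hmem
    refine ⟨k % (l * s), Nat.mod_lt _ hN0, ?_⟩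
    have hkk : hu.unit ^ (k % (l * s)) = hu.unit ^ k := by
      rw [pow_eq_pow_iff_modEq, hou]; exact Nat.mod_modEq k (l * s)
    calc γ ^ (k % (l * s)) = ((hu.unit ^ (k % (l * s)) : Fˣ) : F) := by
          rw [Units.val_pow_eq_pow_val, huv]
      _ = ((hu.unit ^ k : Fˣ) : F) := by rw [hkk]
      _ = ((hxu.unit : Fˣ) : F) := by rw [show hu.unit ^ k = hxu.unit from hk]
      _ = x := hxu.unit_spec
  have hξl : ξ ^ l = 1 := by rw [hξ, ← pow_mul, mul_comm s l]; exact hγ1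
  have hAne : ∀ i, A i ≠ 0 := by
    intro i hAi
    rw [hA] at hAi
    have hneg : ξ ^ (e * i) = -1 := by linear_combination hAi
    have h1 : ((-1 : F)) ^ l = 1 := by
      rw [← hneg, ← pow_mul, mul_comm (e * i) l, pow_mul, hξl, one_pow]
    rw [hlodd.neg_one_pow] at h1
    apply h2F
    linear_combination -h1
  have hb' : ∀ i, ∃ t, t < l * s ∧ γ ^ t = A i := fun i => hsurj _ (hAne i)
  choose b hbN hbA using hb'
  have hA0 : A 0 = 2 := by rw [hA, mul_zero, pow_zero]; ring
  have hmain : ∀ t : ℕ, (γ ^ t) ^ r * ((γ ^ t) ^ (e * s) + 1) = γ ^ (t * r + b (t % l)) := by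
    intro t
    have h1 : (γ ^ t) ^ (e * s) = ξ ^ (e * (t % l)) := by
      rw [← pow_mul, hξ, ← pow_mul]
      rw [bridge1]
      have h2 : t % l ≡ t [MOD l] := Nat.mod_modEq t l
      have h3 : t % l * e ≡ t * e [MOD l] := h2.mul_right e
      have h4 : t % l * e * s ≡ t * e * s [MOD l * s] := h3.mul_right' s
      have e1 : t * (e * s) = t * e * s := by ring
      have e2 : s * (e * (t % l)) = t % l * e * s := by ring
      rw [e1, e2]
      exact h4.symm
    rw [h1, ← hA, ← hbA, ← pow_mul, ← pow_add]
  have step1 : Function.Bijective (fun x : F => x ^ r * (x ^ (e * s) + 1)) ↔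
      (∀ t t' : ℕ, t < l * s → t' < l * s →
        t * r + b (t % l) ≡ t' * r + b (t' % l) [MOD l * s] → t = t') := by
    constructor
    · intro hbij t t' ht ht' hmod
      have h1 : (fun x : F => x ^ r * (x ^ (e * s) + 1)) (γ ^ t)
          = (fun x : F => x ^ r * (x ^ (e * s) + 1)) (γ ^ t') := by
        show (γ ^ t) ^ r * ((γ ^ t) ^ (e * s) + 1) = (γ ^ t') ^ r * ((γ ^ t') ^ (e * s) + 1)
        rw [hmain t, hmain t']
        exact (bridge1 _ _).mpr hmod
      have h2 := hbij.injective h1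
      have h3 := (bridge1 t t').mp h2
      have h4 : t % (l * s) = t' % (l * s) := h3
      rwa [Nat.mod_eq_of_lt ht, Nat.mod_eq_of_lt ht'] at h4
    · intro hS
      rw [← Finite.injective_iff_bijective]
      intro x y hxy
      have hPz : ∀ z : F, z ≠ 0 → (fun x : F => x ^ r * (x ^ (e * s) + 1)) z ≠ 0 := by
        intro z hz
        obtain ⟨t, _, rfl⟩ := hsurj z hz
        show (γ ^ t) ^ r * ((γ ^ t) ^ (e * s) + 1) ≠ 0
        rw [hmain t]
        exact pow_ne_zero _ hγ0
      have hP0 : (fun x : F => x ^ r * (x ^ (e * s) + 1)) (0 : F) = 0 := by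
        show (0 : F) ^ r * ((0 : F) ^ (e * s) + 1) = 0
        rw [zero_pow hr.ne', zero_mul]
      rcases eq_or_ne x 0 with rfl | hx
      · rcases eq_or_ne y 0 with rfl | hy
        · rfl
        · exact absurd (hxy.symm.trans hP0) (hPz y hy)
      · rcases eq_or_ne y 0 with rfl | hy
        · exact absurd (hxy.trans hP0) (hPz x hx)
        · obtain ⟨t, ht, rfl⟩ := hsurj x hx
          obtain ⟨t', ht', rfl⟩ := hsurj y hy
          have hxy' : (γ ^ t) ^ r * ((γ ^ t) ^ (e * s) + 1)
              = (γ ^ t') ^ r * ((γ ^ t') ^ (e * s) + 1) := hxy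
          rw [hmain t, hmain t'] at hxy'
          have := hS t t' ht ht' ((bridge1 _ _).mp hxy')
          rw [this]
  rw [step1, arith_aux l s r hl0 hs b]
  have hrel : ∀ i, 1 ≤ i → i < l → b (l - i) ≡ b i + i * r [MOD l] := by
    intro i h1i hil
    have hfield : ξ ^ (e * i) * A (l - i) = A i := by
      rw [hA, hA, mul_add, mul_one, ← pow_add]
      have hexp : e * i + e * (l - i) = e * l := by
        have h5 : i + (l - i) = l := by omega
        calc e * i + e * (l - i) = e * (i + (l - i)) := by ring
          _ = e * l := by rw [h5]
      rw [hexp]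
      have h6 : ξ ^ (e * l) = 1 := by rw [mul_comm, pow_mul, hξl, one_pow]
      rw [h6]
      ring
    have h2 : γ ^ (s * (e * i) + b (l - i)) = γ ^ (b i) := by
      rw [pow_add, pow_mul, ← hξ, hbA, hbA]
      exact hfield
    have h3 : s * (e * i) + b (l - i) ≡ b i [MOD l] :=
      ((bridge1 _ _).mp h2).of_dvd (Dvd.intro s rfl)
    have h4 : l ∣ s * (e * i) + i * r := by
      obtain ⟨k, hk⟩ := hlres
      refine ⟨i * k, ?_⟩
      have h7 : s * (e * i) + i * r = i * (r + e * s) := by ring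
      rw [h7, hk]; ring
    have h5 : b (l - i) + (s * (e * i) + i * r) ≡ b (l - i) + 0 [MOD l] :=
      (Nat.ModEq.refl _).add ((Nat.modEq_zero_iff_dvd).mpr h4)
    calc b (l - i) = b (l - i) + 0 := by omega
      _ ≡ b (l - i) + (s * (e * i) + i * r) [MOD l] := h5.symm
      _ = (s * (e * i) + b (l - i)) + i * r := by ring
      _ ≡ b i + i * r [MOD l] := h3.add_right _
  have hpows : ∀ i j, (A i ^ s = A j ^ s) ↔ b i ≡ b j [MOD l] := by
    intro i j
    rw [← hbA, ← hbA, ← pow_mul, ← pow_mul, bridge1]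
    constructor
    · intro h
      have hd := Nat.modEq_iff_dvd.mp h
      rw [Nat.modEq_iff_dvd]
      have hs0 : (s : ℤ) ≠ 0 := by exact_mod_cast hs.ne'
      rw [← mul_dvd_mul_iff_right hs0]
      have hrw : ((b j : ℤ) - (b i : ℤ)) * s = ((b j * s : ℕ) : ℤ) - ((b i * s : ℕ) : ℤ) := by
        push_cast; ring
      rw [hrw]
      calc (l : ℤ) * s = ((l * s : ℕ) : ℤ) := by push_cast; ring
        _ ∣ _ := hd
    · intro h
      exact h.mul_right' s
  constructor
  · rintro ⟨hg, hW⟩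
    have hlr : ¬ l ∣ r := by
      intro hdvd
      have hes : l ∣ e * s := (Nat.dvd_add_right hdvd).mp hlres
      have hds : l ∣ s := (Nat.Coprime.dvd_of_dvd_mul_left hle hes)
      have hgl : l ∣ Nat.gcd r s := Nat.dvd_gcd hdvd hds
      rw [hg] at hgl
      have := Nat.le_of_dvd one_pos hgl
      omega
    have hC4 : ∀ i j : ℕ, 1 ≤ i → i ≤ l - 1 → 1 ≤ j → j ≤ l - 1 → i ≠ j →
        A i ^ s ≠ A j ^ s := by
      intro i j h1i hil h1j hjl hne heq
      have hbij : b i ≡ b j [MOD l] := (hpows i j).mp heq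
      have hri := hrel (l - i) (by omega) (by omega)
      have hrj := hrel (l - j) (by omega) (by omega)
      rw [show l - (l - i) = i by omega] at hri
      rw [show l - (l - j) = j by omega] at hrj
      have hkey : (l - i) * r + b (l - i) ≡ (l - j) * r + b (l - j) [MOD l] := by
        calc (l - i) * r + b (l - i) = b (l - i) + (l - i) * r := by ring
          _ ≡ b i [MOD l] := hri.symm
          _ ≡ b j [MOD l] := hbij
          _ ≡ b (l - j) + (l - j) * r [MOD l] := hrj
          _ = (l - j) * r + b (l - j) := by ring
      have := hW (l - i) (l - j) (by omega) (by omega) hkey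
      omega
    have hC5 : ∀ k : ℕ, 1 ≤ k → k ≤ l - 1 → ∀ bz bz' : ℤ, γ ^ bz = A k → γ ^ bz' = (2 : F) →
        ¬ (bz + (k : ℤ) * (r : ℤ) ≡ bz' [ZMOD (l : ℤ)]) := by
      intro k h1k hkl bz bz' hgb hgb' hcon
      have hldvd : (l : ℤ) ∣ ((l * s : ℕ) : ℤ) := ⟨(s : ℤ), by push_cast; ring⟩
      have hzk : γ ^ bz = γ ^ ((b k : ℕ) : ℤ) := by rw [zpow_natCast, hbA, hgb]
      have e1 : bz ≡ ((b k : ℕ) : ℤ) [ZMOD (l : ℤ)] :=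
        ((bridge2 _ _).mp hzk).of_dvd hldvd
      have hzk' : γ ^ bz' = γ ^ ((b 0 : ℕ) : ℤ) := by rw [zpow_natCast, hbA, hA0, hgb']
      have e2 : bz' ≡ ((b 0 : ℕ) : ℤ) [ZMOD (l : ℤ)] :=
        ((bridge2 _ _).mp hzk').of_dvd hldvd
      have e3 : ((b k : ℕ) : ℤ) + (k : ℤ) * r ≡ ((b 0 : ℕ) : ℤ) [ZMOD (l : ℤ)] :=
        ((e1.symm.add_right _).trans hcon).trans e2
      have e4 : (b k + k * r : ℕ) ≡ (b 0 : ℕ) [MOD l] := by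
        rw [← Int.natCast_modEq_iff]
        push_cast
        exact e3
      have e5 : k * r + b k ≡ 0 * r + b 0 [MOD l] := by
        calc k * r + b k = b k + k * r := by ring
          _ ≡ b 0 [MOD l] := e4
          _ = 0 * r + b 0 := by ring
      have := hW k 0 (by omega) hl0 e5
      omega
    have h2s : (2 : F) ^ s = 1 := by
      haveI : NeZero l := ⟨hl0.ne'⟩
      have hfinj : Function.Injective (fun i : Fin l => (((i : ℕ) * r + b i : ℕ) : ZMod l)) := by
        intro i j hij
        simp only [Nat.cast_inj] at hij
        rw [ZMod.natCast_eq_natCast_iff] at hij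
        exact Fin.ext (hW i j i.isLt j.isLt hij)
      have hginj : Function.Injective (fun i : Fin l => ((i : ℕ) : ZMod l)) := by
        intro i j hij
        simp only at hij
        rw [ZMod.natCast_eq_natCast_iff] at hij
        have h1 : (i : ℕ) % l = (j : ℕ) % l := hij
        rw [Nat.mod_eq_of_lt i.isLt, Nat.mod_eq_of_lt j.isLt] at h1
        exact Fin.ext h1
      have hcard : Fintype.card (Fin l) = Fintype.card (ZMod l) := by
        rw [Fintype.card_fin, ZMod.card]
      have hfbij := (Fintype.bijective_iff_injective_and_card _).mpr ⟨hfinj, hcard⟩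
      have hgbij := (Fintype.bijective_iff_injective_and_card _).mpr ⟨hginj, hcard⟩
      have hsum : ∑ i : Fin l, (((i : ℕ) * r + b i : ℕ) : ZMod l)
          = ∑ i : Fin l, ((i : ℕ) : ZMod l) :=
        (Fintype.sum_bijective _ hfbij _ id fun i => rfl).trans
          (Fintype.sum_bijective _ hgbij _ id fun i => rfl).symm
      have hdvdc : (((∑ i ∈ Finset.range l, (i * r + b i)) : ℕ) : ZMod l)
          = ((∑ i ∈ Finset.range l, i : ℕ) : ZMod l) := by
        rw [Nat.cast_sum, Nat.cast_sum,
          ← Fin.sum_univ_eq_sum_range (fun i => ((i * r + b i : ℕ) : ZMod l)) l,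
          ← Fin.sum_univ_eq_sum_range (fun i => ((i : ℕ) : ZMod l)) l]
        exact hsum
      have hS2 : l ∣ ∑ i ∈ Finset.range l, i := by
        rw [Finset.sum_range_id]
        obtain ⟨w, hwodd⟩ := hlodd
        refine ⟨w, ?_⟩
        rw [show l - 1 = 2 * w by omega, show l * (2 * w) = l * w * 2 by ring,
          Nat.mul_div_cancel _ (by norm_num)]
      have hSb : l ∣ ∑ i ∈ Finset.range l, b i := by
        have hsplit : (∑ i ∈ Finset.range l, (i * r + b i))
            = (∑ i ∈ Finset.range l, i) * r + ∑ i ∈ Finset.range l, b i := by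
          rw [Finset.sum_add_distrib, ← Finset.sum_mul]
        have hz2 : ((∑ i ∈ Finset.range l, i : ℕ) : ZMod l) = 0 :=
          (ZMod.natCast_eq_zero_iff _ _).mpr hS2
        have h0 := hdvdc
        rw [hsplit, Nat.cast_add, Nat.cast_mul, hz2, zero_mul, zero_add] at h0
        exact (ZMod.natCast_eq_zero_iff _ _).mp h0
      have hord : orderOf ξ = l := by
        have h1 : orderOf (hu.unit ^ s) = orderOf hu.unit / Nat.gcd (orderOf hu.unit) s :=
          orderOf_pow _
        rw [hou] at h1
        have h2 : Nat.gcd (l * s) s = s := by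
          have h3 := Nat.gcd_mul_right l 1 s
          simpa using h3
        rw [h2, Nat.mul_div_cancel _ hs] at h1
        rw [hξ, ← huv, ← Units.val_pow_eq_pow_val, orderOf_units, h1]
      have hprim : IsPrimitiveRoot ξ l := by
        have := IsPrimitiveRoot.orderOf ξ
        rwa [hord] at this
      have hprimζ : IsPrimitiveRoot (ξ ^ e) l := hprim.pow_of_coprime e (Nat.coprime_comm.mp hle)
      have hprodA : ∏ i ∈ Finset.range l, A i = 2 := by
        have h1 := prod_aux hl0 hlodd hprimζ
        rw [← h1]
        refine Finset.prod_congr rfl fun i _ => ?_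
        rw [hA, pow_mul]
      have hgam : γ ^ (∑ i ∈ Finset.range l, b i) = 2 := by
        rw [← hprodA, ← Finset.prod_pow_eq_pow_sum]
        exact Finset.prod_congr rfl fun i _ => hbA i
      have h6 : (2 : F) ^ s = γ ^ ((∑ i ∈ Finset.range l, b i) * s) := by
        rw [← hgam, pow_mul]
      rw [h6]
      have hdvd2 : orderOf γ ∣ (∑ i ∈ Finset.range l, b i) * s := by
        rw [hγN]
        obtain ⟨w, hw⟩ := hSb
        exact ⟨w, by rw [hw]; ring⟩
      exact orderOf_dvd_iff_pow_eq_one.mp hdvd2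
    have hps : p ∣ 2 ^ s - 1 := by
      have h2le : (1 : ℕ) ≤ 2 ^ s := Nat.one_le_two_pow
      have h1 : ((2 ^ s - 1 : ℕ) : F) = 0 := by
        rw [Nat.cast_sub h2le, Nat.cast_pow, Nat.cast_ofNat, Nat.cast_one, h2s, sub_self]
      exact (CharP.cast_eq_zero_iff F p _).mp h1
    exact ⟨hg, hps, hlr, hC4, hC5⟩
  · rintro ⟨hg, -, -, hC4, hC5⟩
    refine ⟨hg, ?_⟩
    intro i j hi hj hmod
    by_contra hne
    rcases Nat.eq_zero_or_pos i with hi0 | hi0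
    · subst hi0
      have hj1 : 1 ≤ j := by omega
      refine hC5 j hj1 (by omega) ((b j : ℕ) : ℤ) ((b 0 : ℕ) : ℤ) ?_ ?_ ?_
      · rw [zpow_natCast]; exact hbA j
      · rw [zpow_natCast, hbA, hA0]
      · have h' := Int.natCast_modEq_iff.mpr hmod.symm
        push_cast [zero_mul, zero_add] at h'
        rw [add_comm ((b j : ℕ) : ℤ) ((j : ℤ) * (r : ℤ))]
        exact h'
    · rcases Nat.eq_zero_or_pos j with hj0 | hj0
      · subst hj0
        have hi1 : 1 ≤ i := by omega
        refine hC5 i hi1 (by omega) ((b i : ℕ) : ℤ) ((b 0 : ℕ) : ℤ) ?_ ?_ ?_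
        · rw [zpow_natCast]; exact hbA i
        · rw [zpow_natCast, hbA, hA0]
        · have h' := Int.natCast_modEq_iff.mpr hmod
          push_cast [zero_mul, zero_add] at h'
          rw [add_comm ((b i : ℕ) : ℤ) ((i : ℤ) * (r : ℤ))]
          exact h'
      · refine hC4 (l - i) (l - j) (by omega) (by omega) (by omega) (by omega) (by omega) ?_
        rw [hpows]
        calc b (l - i) ≡ b i + i * r [MOD l] := hrel i hi0 hi
          _ = i * r + b i := by ring
          _ ≡ j * r + b j [MOD l] := hmod
          _ = b j + j * r := by ring
          _ ≡ b (l - j) [MOD l] := (hrel j hj0 hj).symm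
end
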